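/- arXiv:1201.3548 — 2 statements merged into one kernel-verified Lean document; each statement's English description precedes it below -/
import Mathlib

section
/- Let a = (a_1, a_2, …) be a sequence in which each a_m is the reciprocal of an odd integer at least 3, let S_a ⊂ ℝ² be the associated carpet with the Euclidean metric and natural measure μ. If ∑_m a_m = ∞ (i.e. a ∉ ℓ¹), then (S_a, d, μ) does not support a 1-Poincaré inequality. -/
open MeasureTheory Metric Set Filter
open scoped ENNReal NNReal Topology

noncomputable section

abbrev Plane : Type := EuclideanSpace ℝ (Fin 2)

/-- `a` is a sequence of reciprocals of odd integers at least 3. -/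
def GoodSeq (a : ℕ → ℝ) : Prop := ∀ m, ∃ k : ℕ, 1 ≤ k ∧ a m = ((2 * k + 1 : ℕ) : ℝ)⁻¹

/-- `sA a m` is the side length `s_m = a_1 ⋯ a_m` of the level `m` squares. -/
def sA (a : ℕ → ℝ) (m : ℕ) : ℝ := ∏ j ∈ Finset.range m, a j

/-- number of subdivisions of each side at step `m+1` (an odd integer `≥ 3`). -/
def nA (a : ℕ → ℝ) (m : ℕ) : ℕ := ⌊(a m)⁻¹⌋₊

/-- the axis-parallel closed square with lower-left corner `c` and side `s`. -/
def csq (c : Plane) (s : ℝ) : Set Plane :=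
  {p | p 0 ∈ Icc (c 0) (c 0 + s) ∧ p 1 ∈ Icc (c 1) (c 1 + s)}

/-- lower-left corners of the level `m` squares `𝒯_m` of the carpet construction. -/
def corners (a : ℕ → ℝ) : ℕ → Set Plane
  | 0 => {p | p 0 = 0 ∧ p 1 = 0}
  | m + 1 =>
      {p | ∃ c ∈ corners a m, ∃ i j : ℕ,
        i < nA a m ∧ j < nA a m ∧ ¬(i = (nA a m - 1) / 2 ∧ j = (nA a m - 1) / 2) ∧
        p 0 = c 0 + i * sA a (m + 1) ∧ p 1 = c 1 + j * sA a (m + 1)}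

/-- the level `m` precarpet `S_{a,m}`. -/
def precarpet (a : ℕ → ℝ) (m : ℕ) : Set Plane :=
  ⋃ c ∈ corners a m, csq c (sA a m)

/-- the carpet `S_a`. -/
def carpet (a : ℕ → ℝ) : Set Plane := ⋂ m, precarpet a m

/-- The natural measure on the carpet: the Borel probability measure giving each level `m`
square of the construction mass `∏_{j≤m} (a_j⁻² - 1)⁻¹`. -/
def IsNaturalMeasure (a : ℕ → ℝ) (μ : Measure ↥(carpet a)) : Prop :=
  IsProbabilityMeasure μ ∧
    ∀ m : ℕ, ∀ c ∈ corners a m,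
      μ (Subtype.val ⁻¹' csq c (sA a m)) =
        ENNReal.ofReal (∏ j ∈ Finset.range m, ((a j)⁻¹ ^ 2 - 1)⁻¹)

/-- `ρ` is an upper gradient of `u`: for every rectifiable curve (equivalently, every
`1`-Lipschitz parametrized curve) `γ : [0, L] → X`, `|u(γ L) - u(γ 0)| ≤ ∫_γ ρ ds`. -/
def IsUpperGradient {X : Type*} [MetricSpace X] (u : X → ℝ) (ρ : X → ℝ≥0∞) : Prop :=
  ∀ L : ℝ, 0 ≤ L → ∀ γ : ℝ → X, LipschitzOnWith 1 γ (Icc 0 L) →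
    ENNReal.ofReal |u (γ L) - u (γ 0)| ≤ ∫⁻ t in Icc 0 L, ρ (γ t)

/-- The metric measure space `(X, d, μ)` supports a `p`-Poincaré inequality. -/
def SupportsPoincare {X : Type*} [MetricSpace X] [MeasurableSpace X]
    (μ : Measure X) (p : ℝ) : Prop :=
  ∃ C : ℝ, 1 ≤ C ∧ ∃ lam : ℝ, 1 ≤ lam ∧
    ∀ u : X → ℝ, Continuous u → ∀ ρ : X → ℝ≥0∞, Measurable ρ → IsUpperGradient u ρ →
      ∀ x : X, ∀ r : ℝ, 0 < r →
        (∫⁻ y in ball x r, ENNReal.ofReal |u y - ⨍ z in ball x r, u z ∂μ| ∂μ) / μ (ball x r) ≤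
          ENNReal.ofReal (C * diam (ball x r)) *
            ((∫⁻ y in ball x (lam * r), ρ y ^ p ∂μ) / μ (ball x (lam * r))) ^ (1 / p)


namespace CarpetAux


variable {a : ℕ → ℝ}

lemma a_eq (ha : GoodSeq a) (m : ℕ) : a m = ((nA a m : ℝ))⁻¹ := by
  obtain ⟨k, hk, hak⟩ := ha m
  have h1 : (0:ℝ) < ((2*k+1 : ℕ):ℝ) := by positivity
  have : (a m)⁻¹ = ((2*k+1 : ℕ):ℝ) := by rw [hak, inv_inv]
  have hn : nA a m = 2*k+1 := by
    rw [nA, this]; exact_mod_cast Nat.floor_natCast _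
  rw [hn, hak]

lemma nA_ge (ha : GoodSeq a) (m : ℕ) : 3 ≤ nA a m := by
  obtain ⟨k, hk, hak⟩ := ha m
  have : (a m)⁻¹ = ((2*k+1 : ℕ):ℝ) := by rw [hak, inv_inv]
  have hn : nA a m = 2*k+1 := by rw [nA, this]; exact_mod_cast Nat.floor_natCast _
  omega

lemma nA_eq_two_k (ha : GoodSeq a) (m : ℕ) : nA a m = 2 * ((nA a m - 1)/2) + 1 := by
  obtain ⟨k, hk, hak⟩ := ha m
  have : (a m)⁻¹ = ((2*k+1 : ℕ):ℝ) := by rw [hak, inv_inv]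
  have hn : nA a m = 2*k+1 := by rw [nA, this]; exact_mod_cast Nat.floor_natCast _
  omega

lemma a_pos (ha : GoodSeq a) (m : ℕ) : 0 < a m := by
  rw [a_eq ha m]
  have := nA_ge ha m; positivity

lemma s_pos (ha : GoodSeq a) (m : ℕ) : 0 < sA a m :=
  Finset.prod_pos fun j _ => a_pos ha j

lemma s_zero : sA a 0 = 1 := Finset.prod_range_zero a

lemma s_succ (ha : GoodSeq a) (m : ℕ) : sA a m = (nA a m : ℝ) * sA a (m+1) := by
  rw [sA, sA, Finset.prod_range_succ, a_eq ha m]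
  have h3 := nA_ge ha m
  have : ((nA a m : ℝ)) ≠ 0 := by positivity
  field_simp


/-- concrete finset model of the corners -/
def cor (a : ℕ → ℝ) : ℕ → Finset (ℕ × ℕ)
  | 0 => {(0,0)}
  | m+1 => (cor a m).biUnion fun c =>
      (((Finset.range (nA a m)) ×ˢ (Finset.range (nA a m))).filter
        fun ij => ¬(ij.1 = (nA a m - 1)/2 ∧ ij.2 = (nA a m - 1)/2)).image
        fun ij => (c.1 * nA a m + ij.1, c.2 * nA a m + ij.2)

def pt (a : ℕ → ℝ) (m : ℕ) (c : ℕ × ℕ) : Plane :=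
  WithLp.toLp 2 (fun t => if t = 0 then (c.1:ℝ) * sA a m else (c.2:ℝ) * sA a m)

@[simp] lemma pt_zero (m : ℕ) (c : ℕ × ℕ) : pt a m c 0 = (c.1:ℝ) * sA a m := rfl

@[simp] lemma pt_one (m : ℕ) (c : ℕ × ℕ) : pt a m c 1 = (c.2:ℝ) * sA a m := by
  simp [pt]

lemma plane_ext {p q : Plane} (h0 : p 0 = q 0) (h1 : p 1 = q 1) : p = q := by
  refine PiLp.ext fun t => ?_
  fin_cases t
  · exact h0
  · exact h1

lemma corners_eq (ha : GoodSeq a) : ∀ m, corners a m = pt a m '' ↑(cor a m) := by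
  intro m
  induction m with
  | zero =>
    ext p
    simp only [corners, cor, mem_setOf_eq, Finset.coe_singleton, image_singleton,
      mem_singleton_iff]
    constructor
    · rintro ⟨h0, h1⟩
      refine (plane_ext ?_ ?_).symm <;> simp [h0, h1]
    · rintro rfl
      simp [s_zero]
  | succ m ih =>
    ext p
    simp only [corners, mem_setOf_eq, ih, mem_image, Finset.mem_coe]
    constructor
    · rintro ⟨c, ⟨c', hc', rfl⟩, i, j, hi, hj, hnot, h0, h1⟩
      refine ⟨(c'.1 * nA a m + i, c'.2 * nA a m + j), ?_, ?_⟩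
      · rw [cor]
        refine Finset.mem_biUnion.2 ⟨c', hc', Finset.mem_image.2 ⟨(i, j), ?_, rfl⟩⟩
        simp only [Finset.mem_filter, Finset.mem_product, Finset.mem_range]
        exact ⟨⟨hi, hj⟩, hnot⟩
      · refine (plane_ext ?_ ?_).symm
        · rw [h0]; simp only [pt_zero]; push_cast; rw [s_succ ha m]; ring
        · rw [h1]; simp only [pt_one]; push_cast; rw [s_succ ha m]; ring
    · rintro ⟨c'', hc'', rfl⟩
      rw [cor] at hc''
      obtain ⟨c', hc', hmem⟩ := Finset.mem_biUnion.1 hc''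
      obtain ⟨ij, hij, rfl⟩ := Finset.mem_image.1 hmem
      simp only [Finset.mem_filter, Finset.mem_product, Finset.mem_range] at hij
      refine ⟨pt a m c', ⟨c', hc', rfl⟩, ij.1, ij.2, hij.1.1, hij.1.2, hij.2, ?_, ?_⟩
      · simp only [pt_zero]; push_cast; rw [s_succ ha m]; ring
      · simp only [pt_one]; push_cast; rw [s_succ ha m]; ring


lemma zero_mem_cor (ha : GoodSeq a) : ∀ m, (0,0) ∈ cor a m := by
  intro m
  induction m with
  | zero => simp [cor]
  | succ m ih =>
    rw [cor]
    refine Finset.mem_biUnion.2 ⟨(0,0), ih, Finset.mem_image.2 ⟨(0,0), ?_, by simp⟩⟩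
    have h3 := nA_ge ha m
    simp only [Finset.mem_filter, Finset.mem_product, Finset.mem_range]
    refine ⟨⟨by omega, by omega⟩, ?_⟩
    rintro ⟨h, -⟩
    omega

lemma cor_one : cor a 1 = ((Finset.range (nA a 0)) ×ˢ (Finset.range (nA a 0))).filter
    (fun ij => ¬(ij.1 = (nA a 0 - 1)/2 ∧ ij.2 = (nA a 0 - 1)/2)) := by
  rw [cor, cor, Finset.singleton_biUnion]
  ext c
  simp only [Finset.mem_image, Finset.mem_filter, Finset.mem_product, Finset.mem_range]
  constructor
  · rintro ⟨ij, hij, rfl⟩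
    simpa using hij
  · rintro hc
    exact ⟨c, hc, by simp⟩

/-- count of right columns at level one -/
lemma card_cor_one_ge (ha : GoodSeq a) :
    ((cor a 1).filter (fun c => (nA a 0 - 1)/2 ≤ c.1)).card
      = ((nA a 0 - 1)/2 + 1) * nA a 0 - 1 := by
  set n := nA a 0 with hn
  set k := (n-1)/2 with hk
  have h3 : 3 ≤ n := nA_ge ha 0
  have hodd : n = 2 * k + 1 := nA_eq_two_k ha 0
  have hset : (cor a 1).filter (fun c => k ≤ c.1)
      = ((Finset.Ico k n) ×ˢ (Finset.range n)).erase (k, k) := by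
    rw [cor_one]
    ext c
    simp only [Finset.mem_filter, Finset.mem_product, Finset.mem_range, Finset.mem_erase,
      Finset.mem_Ico, ne_eq, Prod.ext_iff, not_and]
    omega
  rw [hset, Finset.card_erase_of_mem (by
      simp only [Finset.mem_product, Finset.mem_Ico, Finset.mem_range]
      omega)]
  rw [Finset.card_product, Nat.card_Ico, Finset.card_range]
  have : n - k = k + 1 := by omega
  rw [this]

/-- count of left columns at level one -/
lemma card_cor_one_le (ha : GoodSeq a) :
    ((cor a 1).filter (fun c => c.1 ≤ (nA a 0 - 1)/2)).card
      = ((nA a 0 - 1)/2 + 1) * nA a 0 - 1 := by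
  set n := nA a 0 with hn
  set k := (n-1)/2 with hk
  have h3 : 3 ≤ n := nA_ge ha 0
  have hodd : n = 2 * k + 1 := nA_eq_two_k ha 0
  have hset : (cor a 1).filter (fun c => c.1 ≤ k)
      = ((Finset.range (k+1)) ×ˢ (Finset.range n)).erase (k, k) := by
    rw [cor_one]
    ext c
    simp only [Finset.mem_filter, Finset.mem_product, Finset.mem_range, Finset.mem_erase,
      ne_eq, Prod.ext_iff, not_and]
    omega
  rw [hset, Finset.card_erase_of_mem (by
      simp only [Finset.mem_product, Finset.mem_range]
      omega)]
  rw [Finset.card_product, Finset.card_range, Finset.card_range]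

def Lam (a : ℕ → ℝ) : ℕ → ℕ
  | 0 => 0
  | m+1 => Lam a m * nA a m + (nA a m - 1)/2

def CC (a : ℕ → ℝ) (m : ℕ) : Finset (ℕ × ℕ) := (cor a m).filter (fun c => c.1 = Lam a m)

lemma card_CC_succ (ha : GoodSeq a) (m : ℕ) :
    (CC a (m+1)).card ≤ (CC a m).card * (nA a m - 1) := by
  set n := nA a m with hn
  set k := (n-1)/2 with hk
  have h3 : 3 ≤ n := nA_ge ha m
  have hpos : 0 < n := by omega
  classical
  have hcard : ((CC a m) ×ˢ ((Finset.range n).erase k)).card = (CC a m).card * (n - 1) := by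
    rw [Finset.card_product, Finset.card_erase_of_mem (by simp [Finset.mem_range]; omega),
      Finset.card_range]
  rw [← hcard]
  apply Finset.card_le_card_of_injOn (fun c => ((Lam a m, c.2 / n), c.2 % n))
  · intro c hc
    replace hc : c ∈ CC a (m+1) := hc
    simp only [CC, Finset.mem_filter] at hc
    obtain ⟨hcor, hc1⟩ := hc
    rw [cor] at hcor
    obtain ⟨c', hc', hmem⟩ := Finset.mem_biUnion.1 hcor
    obtain ⟨ij, hij, hceq⟩ := Finset.mem_image.1 hmem
    simp only [Finset.mem_filter, Finset.mem_product, Finset.mem_range] at hij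
    obtain ⟨⟨hi, hj⟩, hnot⟩ := hij
    have hc1' : c.1 = c'.1 * n + ij.1 := by rw [← hceq]
    have hc2' : c.2 = c'.2 * n + ij.2 := by rw [← hceq]
    have hLam : c.1 = Lam a m * n + k := by rw [hc1]; rfl
    have hdiv1 : c'.1 = Lam a m ∧ ij.1 = k := by
      have e : c'.1 * n + ij.1 = Lam a m * n + k := by rw [← hc1', hLam]
      have hkn : k < n := by omega
      have d1 : (c'.1 * n + ij.1) / n = c'.1 := by
        rw [mul_comm, Nat.mul_add_div hpos, Nat.div_eq_of_lt hi]; omega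
      have d2 : (Lam a m * n + k) / n = Lam a m := by
        rw [mul_comm, Nat.mul_add_div hpos, Nat.div_eq_of_lt hkn]; omega
      have m1 : (c'.1 * n + ij.1) % n = ij.1 := by
        rw [mul_comm, Nat.mul_add_mod, Nat.mod_eq_of_lt hi]
      have m2 : (Lam a m * n + k) % n = k := by
        rw [mul_comm, Nat.mul_add_mod, Nat.mod_eq_of_lt hkn]
      constructor
      · rw [← d1, e, d2]
      · rw [← m1, e, m2]
    have hjne : ij.2 ≠ k := by
      intro hje
      exact hnot ⟨hdiv1.2, hje⟩
    have d3 : c.2 / n = c'.2 := by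
      rw [hc2', mul_comm, Nat.mul_add_div hpos, Nat.div_eq_of_lt hj]; omega
    have m3 : c.2 % n = ij.2 := by
      rw [hc2', mul_comm, Nat.mul_add_mod, Nat.mod_eq_of_lt hj]
    refine Finset.mem_coe.2 (Finset.mem_product.2 ⟨Finset.mem_filter.2 ⟨?_, rfl⟩,
      Finset.mem_erase.2 ⟨?_, Finset.mem_range.2 ?_⟩⟩)
    · dsimp only; rw [d3]
      have heta : (Lam a m, c'.2) = c' := by
        rw [← hdiv1.1]
      rw [heta]; exact hc'
    · dsimp only; rw [m3]; exact hjne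
    · dsimp only; rw [m3]; exact hj
  · intro c hc d hd hfe
    replace hc : c ∈ CC a (m+1) := hc
    replace hd : d ∈ CC a (m+1) := hd
    simp only [CC, Finset.mem_coe, Finset.mem_filter] at hc hd
    simp only [Prod.ext_iff, Prod.mk.injEq] at hfe
    have e2 : c.2 = d.2 := by
      obtain ⟨⟨-, hdiv⟩, hmod⟩ := hfe
      rw [← Nat.div_add_mod c.2 n, ← Nat.div_add_mod d.2 n, hdiv, hmod]
    have e1 : c.1 = d.1 := by rw [hc.2, hd.2]
    exact Prod.ext e1 e2

lemma card_CC (ha : GoodSeq a) (m : ℕ) :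
    (CC a m).card ≤ ∏ j ∈ Finset.range m, (nA a j - 1) := by
  induction m with
  | zero => exact le_trans (Finset.card_filter_le (cor a 0) (fun c => c.1 = Lam a 0)) (by simp [cor])
  | succ m ih =>
    rw [Finset.prod_range_succ]
    calc (CC a (m+1)).card ≤ (CC a m).card * (nA a m - 1) := card_CC_succ ha m
    _ ≤ (∏ j ∈ Finset.range m, (nA a j - 1)) * (nA a m - 1) :=
        Nat.mul_le_mul_right _ ih

/-- the central strip at level `m ≥ 1` stays inside the level-one central column -/
lemma L_bounds (ha : GoodSeq a) : ∀ m, 1 ≤ m →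
    (((nA a 0 - 1)/2 : ℕ) : ℝ) * sA a 1 ≤ (Lam a m : ℝ) * sA a m ∧
    (Lam a m : ℝ) * sA a m + sA a m ≤ ((((nA a 0 - 1)/2 : ℕ) : ℝ) + 1) * sA a 1 := by
  intro m hm
  induction m, hm using Nat.le_induction with
  | base =>
    have : Lam a 1 = (nA a 0 - 1)/2 := by simp [Lam]
    rw [this]
    constructor <;> ring_nf <;> norm_num
  | succ m hm ih =>
    have hs := s_pos ha (m+1)
    have hss := s_succ ha m
    have hkn : ((nA a m - 1)/2 : ℕ) + 1 ≤ nA a m := by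
      have := nA_ge ha m; omega
    have hL : (Lam a (m+1) : ℝ) * sA a (m+1)
        = (Lam a m : ℝ) * sA a m + (((nA a m - 1)/2 : ℕ) : ℝ) * sA a (m+1) := by
      show ((Lam a m * nA a m + (nA a m - 1)/2 : ℕ) : ℝ) * sA a (m+1) = _
      push_cast
      rw [hss]; ring
    constructor
    · refine le_trans ih.1 ?_
      rw [hL]
      have : 0 ≤ (((nA a m - 1)/2 : ℕ) : ℝ) * sA a (m+1) := by positivity
      linarith
    · refine le_trans ?_ ih.2
      rw [hL]
      have : (((nA a m - 1)/2 : ℕ) : ℝ) * sA a (m+1) + sA a (m+1) ≤ sA a m := by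
        rw [hss]
        have : (((nA a m - 1)/2 : ℕ) : ℝ) + 1 ≤ (nA a m : ℝ) := by exact_mod_cast hkn
        nlinarith
      linarith

/-- the mass of a level `m` square -/
def mass (a : ℕ → ℝ) (m : ℕ) : ℝ≥0∞ :=
  ENNReal.ofReal (∏ j ∈ Finset.range m, ((a j)⁻¹ ^ 2 - 1)⁻¹)

lemma mass_eq (ha : GoodSeq a) (m : ℕ) :
    mass a m = ENNReal.ofReal (∏ j ∈ Finset.range m, (((nA a j : ℝ)) ^ 2 - 1)⁻¹) := by
  rw [mass]
  congr 1
  refine Finset.prod_congr rfl fun j _ => ?_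
  rw [a_eq ha j, inv_inv]

variable {μ : Measure ↥(carpet a)}

lemma sq_measure (ha : GoodSeq a) (hμ : IsNaturalMeasure a μ) (m : ℕ) {c' : ℕ × ℕ}
    (hc' : c' ∈ cor a m) :
    μ (Subtype.val ⁻¹' csq (pt a m c') (sA a m)) = mass a m :=
  hμ.2 m (pt a m c') (by rw [corners_eq ha m]; exact ⟨c', hc', rfl⟩)

lemma carpet_sub (m : ℕ) : carpet a ⊆ precarpet a m := iInter_subset _ m

lemma carpet_unit (p : Plane) (hp : p ∈ carpet a) : p 0 ∈ Icc (0:ℝ) 1 ∧ p 1 ∈ Icc (0:ℝ) 1 := by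
  have := carpet_sub (a := a) 0 hp
  rw [precarpet] at this
  obtain ⟨c, hc, hcs⟩ := mem_iUnion₂.1 this
  rw [corners] at hc
  obtain ⟨h0, h1⟩ := hc
  rw [csq, s_zero] at hcs
  rw [h0, h1] at hcs
  simpa using hcs

/-- covering bound: if every level `m` square meeting `S` has first index satisfying `P`,
then the measure of `S` is at most the number of such squares times the mass. -/
lemma cover_bound (ha : GoodSeq a) (hμ : IsNaturalMeasure a μ) (m : ℕ) (P : ℕ → Prop)
    [DecidablePred P] (S : Set Plane)
    (hS : ∀ c' : ℕ × ℕ, c' ∈ cor a m → ∀ p : Plane, p ∈ carpet a →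
      p ∈ csq (pt a m c') (sA a m) → p ∈ S → P c'.1) :
    μ (Subtype.val ⁻¹' S) ≤ ((cor a m).filter (fun c => P c.1)).card * mass a m := by
  have hsub : (Subtype.val ⁻¹' S : Set ↥(carpet a)) ⊆
      ⋃ c' ∈ (cor a m).filter (fun c => P c.1), Subtype.val ⁻¹' csq (pt a m c') (sA a m) := by
    intro x hx
    have hxc : (x : Plane) ∈ carpet a := x.2
    have := carpet_sub (a := a) m hxc
    rw [precarpet] at this
    obtain ⟨c, hc, hcs⟩ := mem_iUnion₂.1 this
    rw [corners_eq ha m] at hc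
    obtain ⟨c', hc', rfl⟩ := hc
    refine mem_iUnion₂.2 ⟨c', Finset.mem_filter.2 ⟨hc', hS c' hc' _ hxc hcs hx⟩, hcs⟩
  calc μ (Subtype.val ⁻¹' S) ≤
      μ (⋃ c' ∈ (cor a m).filter (fun c => P c.1), Subtype.val ⁻¹' csq (pt a m c') (sA a m)) :=
        measure_mono hsub
    _ ≤ ∑ c' ∈ (cor a m).filter (fun c => P c.1), μ (Subtype.val ⁻¹' csq (pt a m c') (sA a m)) :=
        measure_biUnion_finset_le _ _
    _ = ((cor a m).filter (fun c => P c.1)).card * mass a m := by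
        rw [Finset.sum_congr rfl (fun c' hc' => sq_measure ha hμ m (Finset.mem_filter.1 hc').1)]
        rw [Finset.sum_const, nsmul_eq_mul]

lemma coord_lip (i : Fin 2) : LipschitzWith 1 (fun p : Plane => p i) := by
  refine LipschitzWith.of_dist_le_mul fun p q => ?_
  rw [NNReal.coe_one, one_mul, EuclideanSpace.dist_eq, Fin.sum_univ_two]
  have h1 : dist (p i) (q i) = Real.sqrt (dist (p i) (q i)^2) := by
    rw [Real.sqrt_sq dist_nonneg]
  rw [h1]
  apply Real.sqrt_le_sqrt
  fin_cases i <;> simp <;> positivity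

lemma clip_mono (L w : ℝ) : Monotone (fun x => min (L+w) (max L x)) :=
  fun x y hxy => min_le_min (le_refl _) (max_le_max (le_refl _) hxy)

lemma clip_core_mono (L w x y : ℝ) (hw : 0 < w) (hxy : x ≤ y) :
    min (L+w) (max L y) - min (L+w) (max L x) ≤ max 0 (min (L+w) y - max L x) := by
  rcases le_total y L with h1 | h1
  · have cy : min (L+w) (max L y) = L := by
      rw [max_eq_left h1, min_eq_right (by linarith)]
    have cx : L ≤ min (L+w) (max L x) := le_min (by linarith) (le_max_left _ _)
    refine le_trans (by linarith) (le_max_left 0 _)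
  · rcases le_total (L+w) x with h2 | h2
    · have cx : min (L+w) (max L x) = L + w :=
        min_eq_left (le_trans h2 (le_max_right L x))
      have cy : min (L+w) (max L y) ≤ L + w := min_le_left _ _
      refine le_trans (by linarith) (le_max_left 0 _)
    · have cx : min (L+w) (max L x) = max L x :=
        min_eq_right (max_le (by linarith) h2)
      have cy : min (L+w) (max L y) ≤ min (L+w) y := by
        rw [max_eq_right h1]
      refine le_trans ?_ (le_max_right 0 _)
      rw [cx]
      linarith [cy]

lemma clip_core (L w x y : ℝ) (hw : 0 < w) :
    |(min (L+w) (max L y) - L)/w - (min (L+w) (max L x) - L)/w|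
      ≤ w⁻¹ * max 0 (min (L+w) (max x y) - max L (min x y)) := by
  rw [div_sub_div_same]
  have : min (L+w) (max L y) - L - (min (L+w) (max L x) - L)
      = min (L+w) (max L y) - min (L+w) (max L x) := by ring
  rw [this, abs_div, abs_of_pos hw, div_eq_inv_mul]
  apply mul_le_mul_of_nonneg_left _ (by positivity)
  rcases le_total x y with hxy | hxy
  · rw [abs_of_nonneg (by linarith [clip_mono L w hxy] : (0:ℝ) ≤ _), max_eq_right hxy,
      min_eq_left hxy]
    exact clip_core_mono L w x y hw hxy
  · rw [abs_sub_comm, abs_of_nonneg (by linarith [clip_mono L w hxy] : (0:ℝ) ≤ _),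
      max_eq_left hxy, min_eq_right hxy]
    exact clip_core_mono L w y x hw hxy

lemma ofReal_max_zero (r : ℝ) : ENNReal.ofReal (max 0 r) = ENNReal.ofReal r := by
  rcases le_total r 0 with h | h
  · rw [max_eq_left h, ENNReal.ofReal_zero, ENNReal.ofReal_eq_zero.2 h]
  · rw [max_eq_right h]

lemma upper_gradient_clip (S : Set Plane) (L w : ℝ) (hw : 0 < w) :
    IsUpperGradient (X := ↥S)
      (fun z => (min (L+w) (max L ((z : Plane) 0)) - L)/w)
      ((Subtype.val ⁻¹' {p : Plane | L < p 0 ∧ p 0 < L + w}).indicator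
        (fun _ => ENNReal.ofReal w⁻¹)) := by
  intro T hT γ hγ
  have hsub : LipschitzWith 1 (fun z : ↥S => (z : Plane) 0) :=
    by simpa only [mul_one, Function.comp_def] using (coord_lip 0).comp (LipschitzWith.subtype_val _)
  have hlip : LipschitzOnWith 1 (fun t => (γ t : Plane) 0) (Icc 0 T) := by
    simpa only [mul_one, Function.comp_def] using LipschitzWith.comp_lipschitzOnWith hsub hγ
  obtain ⟨H, Hlip, hHeq⟩ := hlip.extend_real
  have h0T : (0:ℝ) ∈ Icc 0 T := ⟨le_refl _, hT⟩
  have hTT : T ∈ Icc 0 T := ⟨hT, le_refl _⟩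
  have hH0 : H 0 = (γ 0 : Plane) 0 := (hHeq h0T).symm
  have hHT : H T = (γ T : Plane) 0 := (hHeq hTT).symm
  set E := Icc 0 T ∩ H ⁻¹' (Ioo L (L+w)) with hE
  have hEmeas : MeasurableSet E :=
    measurableSet_Icc.inter (Hlip.continuous.measurable measurableSet_Ioo)
  -- step A
  have stepA : ENNReal.ofReal
      |(min (L+w) (max L ((γ T : Plane) 0)) - L)/w - (min (L+w) (max L ((γ 0 : Plane) 0)) - L)/w|
      ≤ ENNReal.ofReal w⁻¹ *
        ENNReal.ofReal (min (L+w) (max (H 0) (H T)) - max L (min (H 0) (H T))) := by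
    rw [← hH0, ← hHT, ← ofReal_max_zero (min (L+w) (max (H 0) (H T)) - max L (min (H 0) (H T))),
      ← ENNReal.ofReal_mul (by positivity)]
    exact ENNReal.ofReal_le_ofReal (clip_core L w (H 0) (H T) hw)
  -- step B
  have stepB : ENNReal.ofReal (min (L+w) (max (H 0) (H T)) - max L (min (H 0) (H T)))
      ≤ volume E := by
    have hioo : Ioo (max L (min (H 0) (H T))) (min (L+w) (max (H 0) (H T)))
        = Ioo L (L+w) ∩ Ioo (min (H 0) (H T)) (max (H 0) (H T)) := by
      rw [Set.Ioo_inter_Ioo]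
    have hsub2 : Ioo (max L (min (H 0) (H T))) (min (L+w) (max (H 0) (H T))) ⊆ H '' E := by
      rw [hioo]
      rintro z ⟨hz1, hz2⟩
      rcases le_total (H 0) (H T) with hcase | hcase
      · rw [min_eq_left hcase, max_eq_right hcase] at hz2
        obtain ⟨t, ht, hHt⟩ := intermediate_value_Ioo hT Hlip.continuous.continuousOn hz2
        exact ⟨t, ⟨Ioo_subset_Icc_self ht, by rw [mem_preimage, hHt]; exact hz1⟩, hHt⟩
      · rw [min_eq_right hcase, max_eq_left hcase] at hz2
        obtain ⟨t, ht, hHt⟩ := intermediate_value_Ioo' hT Hlip.continuous.continuousOn hz2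
        exact ⟨t, ⟨Ioo_subset_Icc_self ht, by rw [mem_preimage, hHt]; exact hz1⟩, hHt⟩
    calc ENNReal.ofReal (min (L+w) (max (H 0) (H T)) - max L (min (H 0) (H T)))
        = volume (Ioo (max L (min (H 0) (H T))) (min (L+w) (max (H 0) (H T)))) :=
          (Real.volume_Ioo).symm
      _ ≤ volume (H '' E) := measure_mono hsub2
      _ ≤ volume E := by
          have h1 : μH[(1:ℝ)] (H '' E) ≤ ((1:ℝ≥0) : ℝ≥0∞) ^ (1:ℝ) * μH[(1:ℝ)] E :=
            LipschitzOnWith.hausdorffMeasure_image_le (LipschitzWith.lipschitzOnWith Hlip (s := E)) zero_le_one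
          rw [MeasureTheory.hausdorffMeasure_real] at h1
          simpa using h1
  -- step C
  have stepC : ENNReal.ofReal w⁻¹ * volume E ≤
      ∫⁻ t in Icc 0 T, ((Subtype.val ⁻¹' {p : Plane | L < p 0 ∧ p 0 < L + w}).indicator
        (fun _ => ENNReal.ofReal w⁻¹)) (γ t) := by
    have hle : ∀ t, E.indicator (fun _ => ENNReal.ofReal w⁻¹) t ≤
        ((Subtype.val ⁻¹' {p : Plane | L < p 0 ∧ p 0 < L + w}).indicator
          (fun _ => ENNReal.ofReal w⁻¹)) (γ t) := by
      intro t
      by_cases ht : t ∈ E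
      · rw [Set.indicator_of_mem ht]
        have hmem : γ t ∈ (Subtype.val ⁻¹' {p : Plane | L < p 0 ∧ p 0 < L + w}) := by
          have h2 : H t ∈ Ioo L (L+w) := ht.2
          have h3 : (γ t : Plane) 0 = H t := hHeq ht.1
          exact ⟨by rw [h3]; exact h2.1, by rw [h3]; exact h2.2⟩
        rw [Set.indicator_of_mem hmem]
      · rw [Set.indicator_of_notMem ht]
        exact zero_le
    calc ENNReal.ofReal w⁻¹ * volume E
        = ∫⁻ t, E.indicator (fun _ => ENNReal.ofReal w⁻¹) t ∂(volume.restrict (Icc 0 T)) := by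
          rw [lintegral_indicator hEmeas, setLIntegral_const,
            Measure.restrict_apply hEmeas, Set.inter_eq_left.2 (fun t ht => ht.1)]
      _ ≤ _ := lintegral_mono hle
  calc ENNReal.ofReal _ ≤ _ := stepA
    _ ≤ ENNReal.ofReal w⁻¹ * volume E := by
        exact mul_le_mul_right stepB _
    _ ≤ _ := stepC

lemma s_eq (ha : GoodSeq a) (m : ℕ) : sA a m = (∏ j ∈ Finset.range m, (nA a j : ℝ))⁻¹ := by
  rw [sA, ← Finset.prod_inv_distrib]
  exact Finset.prod_congr rfl fun j _ => by rw [a_eq ha j]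

lemma factor_bound (ha : GoodSeq a) (j : ℕ) :
    (nA a j : ℝ) * ((nA a j : ℝ) - 1) * (((nA a j : ℝ))^2 - 1)⁻¹
      ≤ Real.exp (-(a j)/2) := by
  set x := (nA a j : ℝ) with hx
  have h3 : (3:ℝ) ≤ x := by rw [hx]; exact_mod_cast nA_ge ha j
  have heq : x * (x - 1) * (x^2 - 1)⁻¹ = x / (x + 1) := by
    have h1 : x^2 - 1 = (x - 1) * (x + 1) := by ring
    rw [h1, mul_inv, div_eq_mul_inv]
    have hne : x - 1 ≠ 0 := by linarith
    field_simp
  rw [heq, a_eq ha j, ← hx]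
  have hexp : 1 + (-x⁻¹/2) ≤ Real.exp (-x⁻¹/2) := by
    have := Real.add_one_le_exp (-x⁻¹/2)
    linarith
  have hfrac : x / (x + 1) ≤ 1 - x⁻¹/2 := by
    rw [div_le_iff₀ (by linarith)]
    have hxpos : (0:ℝ) < x := by linarith
    have : x⁻¹ * x = 1 := inv_mul_cancel₀ (by linarith)
    nlinarith [this]
  linarith

lemma key_prod (ha : GoodSeq a) (m : ℕ) :
    (∏ j ∈ Finset.range m, (nA a j : ℝ)) *
      ((∏ j ∈ Finset.range m, (nA a j - 1) : ℕ) : ℝ) *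
      (∏ j ∈ Finset.range m, (((nA a j : ℝ))^2 - 1)⁻¹)
      ≤ Real.exp (-(∑ j ∈ Finset.range m, a j)/2) := by
  have hcast : ((∏ j ∈ Finset.range m, (nA a j - 1) : ℕ) : ℝ)
      = ∏ j ∈ Finset.range m, ((nA a j : ℝ) - 1) := by
    rw [Nat.cast_prod]
    refine Finset.prod_congr rfl fun j _ => ?_
    have := nA_ge ha j
    push_cast [Nat.cast_sub (by omega : 1 ≤ nA a j)]
    ring
  rw [hcast, ← Finset.prod_mul_distrib, ← Finset.prod_mul_distrib]
  have hexp : Real.exp (-(∑ j ∈ Finset.range m, a j)/2)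
      = ∏ j ∈ Finset.range m, Real.exp (-(a j)/2) := by
    rw [← Real.exp_sum]
    congr 1
    rw [← Finset.sum_div, ← Finset.sum_neg_distrib]
  rw [hexp]
  refine Finset.prod_le_prod (fun j _ => ?_) (fun j _ => factor_bound ha j)
  have h3 : (3:ℝ) ≤ (nA a j : ℝ) := by exact_mod_cast (nA_ge ha j)
  have h0 : (0:ℝ) < ((nA a j:ℝ))^2 - 1 := by nlinarith
  have h1 : (0:ℝ) ≤ (nA a j : ℝ) * ((nA a j : ℝ) - 1) := by nlinarith
  positivity

lemma sum_tendsto (ha : GoodSeq a) (h : ¬ Summable a) :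
    Tendsto (fun m => ∑ j ∈ Finset.range m, a j) atTop atTop := by
  refine (not_summable_iff_tendsto_nat_atTop_of_nonneg fun j => ?_).1 h
  have := a_eq ha j
  have h3 := nA_ge ha j
  rw [this]
  positivity


lemma origin_mem (ha : GoodSeq a) : pt a 0 (0,0) ∈ carpet a := by
  rw [carpet]
  refine mem_iInter.2 fun m => ?_
  rw [precarpet]
  refine mem_iUnion₂.2 ⟨pt a m (0,0), ?_, ?_⟩
  · rw [corners_eq ha m]
    exact ⟨(0,0), zero_mem_cor ha m, rfl⟩
  · have hs := (s_pos ha m).le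
    constructor <;> simp [s_zero, hs]

lemma dist_lt_two (y z : ↥(carpet a)) : dist y z < 2 := by
  have hy := carpet_unit (y : Plane) y.2
  have hz := carpet_unit (z : Plane) z.2
  rw [Subtype.dist_eq, EuclideanSpace.dist_eq, Fin.sum_univ_two]
  have h0 : dist ((y:Plane) 0) ((z:Plane) 0) ≤ 1 := by
    rw [Real.dist_eq, abs_le]
    obtain ⟨⟨a1,a2⟩,_⟩ := hy; obtain ⟨⟨b1,b2⟩,_⟩ := hz
    constructor <;> linarith
  have h1 : dist ((y:Plane) 1) ((z:Plane) 1) ≤ 1 := by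
    rw [Real.dist_eq, abs_le]
    obtain ⟨_,⟨a1,a2⟩⟩ := hy; obtain ⟨_,⟨b1,b2⟩⟩ := hz
    constructor <;> linarith
  have : dist ((y:Plane) 0) ((z:Plane) 0) ^ 2 + dist ((y:Plane) 1) ((z:Plane) 1) ^ 2 ≤ 2 := by
    have d0 : (0:ℝ) ≤ dist ((y:Plane) 0) ((z:Plane) 0) := dist_nonneg
    have d1 : (0:ℝ) ≤ dist ((y:Plane) 1) ((z:Plane) 1) := dist_nonneg
    nlinarith
  calc Real.sqrt (dist ((y:Plane) 0) ((z:Plane) 0) ^ 2 + dist ((y:Plane) 1) ((z:Plane) 1) ^ 2)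
      ≤ Real.sqrt 2 := Real.sqrt_le_sqrt this
    _ < 2 := by
        nlinarith [Real.sq_sqrt (by norm_num : (2:ℝ) ≥ 0), Real.sqrt_nonneg 2]

set_option maxHeartbeats 2000000 in
lemma main (a : ℕ → ℝ) (ha : GoodSeq a)
    (h : ¬ Summable a) (μ : Measure ↥(carpet a)) (hμ : IsNaturalMeasure a μ) :
    ¬ SupportsPoincare μ 1 := by
  classical
  intro hPI
  obtain ⟨C, hC, lam, hlam, hP⟩ := hPI
  haveI hprob : IsProbabilityMeasure μ := hμ.1
  have h3 : 3 ≤ nA a 0 := nA_ge ha 0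
  have hodd : nA a 0 = 2*((nA a 0 - 1)/2)+1 := nA_eq_two_k ha 0
  have hn0r : (3:ℝ) ≤ ((nA a 0:ℕ):ℝ) := by exact_mod_cast h3
  have hsq1 : (0:ℝ) < ((nA a 0:ℕ):ℝ)^2 - 1 := by nlinarith
  set cnt : ℕ := ((nA a 0 - 1)/2 + 1) * nA a 0 - 1 with hcnt
  set α : ℝ := 1 - (cnt : ℝ) * (((nA a 0:ℕ):ℝ)^2 - 1)⁻¹ with hα
  have hαpos : 0 < α := by
    rw [hα]
    have hc : (cnt:ℝ) < ((nA a 0:ℕ):ℝ)^2 - 1 := by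
      have h1 : 1 ≤ ((nA a 0 - 1)/2 + 1) * nA a 0 := Nat.mul_pos (by omega) (by omega)
      have hcc : (cnt:ℝ) = ((((nA a 0 - 1)/2 : ℕ):ℝ) + 1)*((nA a 0:ℕ):ℝ) - 1 := by
        rw [hcnt]; push_cast [Nat.cast_sub h1]; ring
      rw [hcc]
      have hk1 : (1:ℝ) ≤ (((nA a 0 - 1)/2 : ℕ):ℝ) := by
        have : 1 ≤ (nA a 0 - 1)/2 := by omega
        exact_mod_cast this
      have hno : ((nA a 0:ℕ):ℝ) = 2*(((nA a 0 - 1)/2 : ℕ):ℝ)+1 := by exact_mod_cast hodd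
      nlinarith
    have hlt : (cnt:ℝ) * (((nA a 0:ℕ):ℝ)^2-1)⁻¹ < 1 := by
      rw [← div_eq_mul_inv]
      exact (div_lt_one hsq1).2 hc
    linarith
  have hCpos : (0:ℝ) < 2*C := by linarith
  obtain ⟨m, hm1, hmS⟩ : ∃ m, 1 ≤ m ∧ 2 * Real.log (2*C/α) < ∑ j ∈ Finset.range m, a j := by
    have hev := (sum_tendsto ha h).eventually_gt_atTop (2 * Real.log (2*C/α))
    obtain ⟨m, hm⟩ := (hev.and (eventually_ge_atTop 1)).exists
    exact ⟨m, hm.2, hm.1⟩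
  have hexpα : 2*C * Real.exp (-(∑ j ∈ Finset.range m, a j)/2) < α := by
    have h2 : Real.exp (- Real.log (2*C/α)) = α/(2*C) := by
      rw [Real.exp_neg, Real.exp_log (by positivity), inv_div]
    have h1 : Real.exp (-(∑ j ∈ Finset.range m, a j)/2) < α/(2*C) := by
      rw [← h2]
      apply Real.exp_lt_exp.2; linarith
    calc 2*C * Real.exp (-(∑ j ∈ Finset.range m, a j)/2) < 2*C * (α/(2*C)) :=
          mul_lt_mul_of_pos_left h1 hCpos
      _ = α := by field_simp
  -- competitor function and upper gradient
  set w := sA a m with hwdef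
  have hw : 0 < w := s_pos ha m
  set Lm := (Lam a m : ℝ) * sA a m with hLmdef
  set u : ↥(carpet a) → ℝ := fun z => (min (Lm+w) (max Lm ((z:Plane) 0)) - Lm)/w with hu
  set ρ : ↥(carpet a) → ℝ≥0∞ :=
    (Subtype.val ⁻¹' {p : Plane | Lm < p 0 ∧ p 0 < Lm + w}).indicator
      (fun _ => ENNReal.ofReal w⁻¹) with hρ
  have hc0 : Continuous (fun z : ↥(carpet a) => (z:Plane) 0) :=
    ((coord_lip 0).continuous).comp continuous_subtype_val
  have hu_cont : Continuous u :=
    ((continuous_const.min (continuous_const.max hc0)).sub continuous_const).div_const w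
  have hSmeas : MeasurableSet {p : Plane | Lm < p 0 ∧ p 0 < Lm + w} := by
    have hSioo : {p : Plane | Lm < p 0 ∧ p 0 < Lm + w}
        = (fun p : Plane => p 0) ⁻¹' (Ioo Lm (Lm+w)) := rfl
    rw [hSioo]; exact ((coord_lip 0).continuous.measurable) measurableSet_Ioo
  have hstrip_meas : MeasurableSet
      (Subtype.val ⁻¹' {p : Plane | Lm < p 0 ∧ p 0 < Lm + w} : Set ↥(carpet a)) :=
    measurable_subtype_coe hSmeas
  have hρ_meas : Measurable ρ := measurable_const.indicator hstrip_meas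
  have hug : IsUpperGradient u ρ := upper_gradient_clip (carpet a) Lm w hw
  have key := hP u hu_cont ρ hρ_meas hug ⟨pt a 0 (0,0), origin_mem ha⟩ 2 two_pos
  have hball2 : Metric.ball (⟨pt a 0 (0,0), origin_mem ha⟩ : ↥(carpet a)) 2 = univ :=
    eq_univ_of_forall fun y => mem_ball.2 (dist_lt_two _ _)
  have hballl : Metric.ball (⟨pt a 0 (0,0), origin_mem ha⟩ : ↥(carpet a)) (lam*2) = univ :=
    eq_univ_of_forall fun y => mem_ball.2 (lt_of_lt_of_le (dist_lt_two _ _) (by nlinarith))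
  rw [hball2, hballl] at key
  simp only [Measure.restrict_univ, measure_univ, div_one, one_div_one,
    ENNReal.rpow_one] at key
  set ubar := (⨍ z, u z ∂μ) with hubardef
  -- bounds on u and its average
  have hu01 : ∀ z, 0 ≤ u z ∧ u z ≤ 1 := by
    intro z
    have h1 : Lm ≤ min (Lm+w) (max Lm ((z:Plane) 0)) := le_min (by linarith) (le_max_left _ _)
    have h2 : min (Lm+w) (max Lm ((z:Plane) 0)) ≤ Lm + w := min_le_left _ _
    constructor
    · exact div_nonneg (by linarith) hw.le
    · exact (div_le_one hw).2 (by linarith)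
  have hu_int : Integrable u μ := by
    refine (integrable_const (1:ℝ)).mono' hu_cont.aestronglyMeasurable (ae_of_all _ fun z => ?_)
    rw [Real.norm_eq_abs, abs_le]
    exact ⟨by linarith [(hu01 z).1], (hu01 z).2⟩
  have hubar_int : ubar = ∫ z, u z ∂μ := average_eq_integral μ u
  have hubar0 : 0 ≤ ubar := by rw [hubar_int]; exact integral_nonneg fun z => (hu01 z).1
  have hubar1 : ubar ≤ 1 := by
    rw [hubar_int]
    calc ∫ z, u z ∂μ ≤ ∫ _, (1:ℝ) ∂μ :=
          integral_mono hu_int (integrable_const 1) fun z => (hu01 z).2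
      _ = 1 := by simp
  -- the sets A and B
  set A : Set ↥(carpet a) := Subtype.val ⁻¹' {p : Plane | p 0 ≤ Lm} with hA
  set B : Set ↥(carpet a) := Subtype.val ⁻¹' {p : Plane | Lm + w ≤ p 0} with hB
  have hAmeas : MeasurableSet A := by
    refine measurable_subtype_coe ?_
    have : {p : Plane | p 0 ≤ Lm} = (fun p : Plane => p 0) ⁻¹' (Iic Lm) := rfl
    rw [this]; exact (coord_lip 0).continuous.measurable measurableSet_Iic
  have hBmeas : MeasurableSet B := by
    refine measurable_subtype_coe ?_
    have : {p : Plane | Lm + w ≤ p 0} = (fun p : Plane => p 0) ⁻¹' (Ici (Lm+w)) := rfl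
    rw [this]; exact (coord_lip 0).continuous.measurable measurableSet_Ici
  have hdisj : Disjoint A B := by
    rw [Set.disjoint_left]
    intro z hz1 hz2
    have h1 : ((z:Plane) 0) ≤ Lm := hz1
    have h2 : Lm + w ≤ ((z:Plane) 0) := hz2
    linarith
  -- complement bound machine
  have hcompl_bound : ∀ s : Set ↥(carpet a),
      μ s ≤ ENNReal.ofReal ((cnt:ℝ) * (((nA a 0:ℕ):ℝ)^2-1)⁻¹) → ENNReal.ofReal α ≤ μ sᶜ := by
    intro s hs
    have h1 : (1:ℝ≥0∞) ≤ μ sᶜ + μ s := by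
      rw [← measure_univ (μ := μ), ← Set.compl_union_self s]
      exact measure_union_le _ _
    have h2 : ENNReal.ofReal α = 1 - ENNReal.ofReal ((cnt:ℝ) * (((nA a 0:ℕ):ℝ)^2-1)⁻¹) := by
      rw [hα, ENNReal.ofReal_sub _ (by positivity), ENNReal.ofReal_one]
    rw [h2]
    refine le_trans (tsub_le_tsub_left hs (1:ℝ≥0∞)) ?_
    exact tsub_le_iff_right.2 h1
  have hmass1 : mass a 1 = ENNReal.ofReal ((((nA a 0:ℕ):ℝ)^2 - 1)⁻¹) := by
    rw [mass_eq ha 1, Finset.prod_range_one]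
  -- measure of A-complement
  have hμA : ENNReal.ofReal α ≤ μ A := by
    have hAc : μ Aᶜ ≤ ENNReal.ofReal ((cnt:ℝ) * (((nA a 0:ℕ):ℝ)^2-1)⁻¹) := by
      have hcompl : (Aᶜ : Set ↥(carpet a)) = Subtype.val ⁻¹' {p : Plane | Lm < p 0} := by
        rw [hA, ← preimage_compl]
        congr 1
        ext p; simp [not_le]
      rw [hcompl]
      have hsub : (Subtype.val ⁻¹' {p : Plane | Lm < p 0} : Set ↥(carpet a)) ⊆
          Subtype.val ⁻¹' {p : Plane | (((nA a 0 - 1)/2 : ℕ):ℝ) * sA a 1 < p 0} := by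
        intro z hz
        have hL := (L_bounds ha m hm1).1
        have hz' : Lm < ((z:Plane) 0) := hz
        exact lt_of_le_of_lt (le_trans hL (le_of_eq hLmdef.symm)) hz'
      refine le_trans (measure_mono hsub) ?_
      have hcb := cover_bound ha hμ 1 (fun i => (nA a 0 - 1)/2 ≤ i)
        {p : Plane | (((nA a 0 - 1)/2 : ℕ):ℝ) * sA a 1 < p 0} ?_
      · refine le_trans hcb ?_
        rw [card_cor_one_ge ha, hmass1, ← ENNReal.ofReal_natCast cnt,
          ← ENNReal.ofReal_mul (by positivity)]
      · intro c' hc' p hp hsq hS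
        have hs1 : (0:ℝ) < sA a 1 := s_pos ha 1
        have hb1 : p 0 ≤ (c'.1:ℝ) * sA a 1 + sA a 1 := by
          have := hsq.1.2; simpa using this
        have hb2 : (((nA a 0 - 1)/2 : ℕ):ℝ) * sA a 1 < p 0 := hS
        have hlt : (((nA a 0 - 1)/2 : ℕ):ℝ) * sA a 1 < ((c'.1:ℝ) + 1) * sA a 1 := by nlinarith
        have hlt2 : (((nA a 0 - 1)/2 : ℕ):ℝ) < (c'.1:ℝ) + 1 := lt_of_mul_lt_mul_right
          (by simpa [mul_comm] using hlt) hs1.le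
        have : (nA a 0 - 1)/2 < c'.1 + 1 := by exact_mod_cast hlt2
        omega
    have := hcompl_bound Aᶜ hAc
    rwa [compl_compl] at this
  -- measure of B-complement
  have hμB : ENNReal.ofReal α ≤ μ B := by
    have hBc : μ Bᶜ ≤ ENNReal.ofReal ((cnt:ℝ) * (((nA a 0:ℕ):ℝ)^2-1)⁻¹) := by
      have hcompl : (Bᶜ : Set ↥(carpet a)) = Subtype.val ⁻¹' {p : Plane | p 0 < Lm + w} := by
        rw [hB, ← preimage_compl]
        congr 1
        ext p; simp [not_le]
      rw [hcompl]
      have hsub : (Subtype.val ⁻¹' {p : Plane | p 0 < Lm + w} : Set ↥(carpet a)) ⊆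
          Subtype.val ⁻¹' {p : Plane | p 0 < ((((nA a 0 - 1)/2 : ℕ):ℝ) + 1) * sA a 1} := by
        intro z hz
        have hL := (L_bounds ha m hm1).2
        have hz' : ((z:Plane) 0) < Lm + w := hz
        have : Lm + w ≤ ((((nA a 0 - 1)/2 : ℕ):ℝ) + 1) * sA a 1 := by
          rw [hLmdef, hwdef]; linarith [hL]
        exact lt_of_lt_of_le hz' this
      refine le_trans (measure_mono hsub) ?_
      have hcb := cover_bound ha hμ 1 (fun i => i ≤ (nA a 0 - 1)/2)
        {p : Plane | p 0 < ((((nA a 0 - 1)/2 : ℕ):ℝ) + 1) * sA a 1} ?_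
      · refine le_trans hcb ?_
        rw [card_cor_one_le ha, hmass1, ← ENNReal.ofReal_natCast cnt,
          ← ENNReal.ofReal_mul (by positivity)]
      · intro c' hc' p hp hsq hS
        have hs1 : (0:ℝ) < sA a 1 := s_pos ha 1
        have hb1 : (c'.1:ℝ) * sA a 1 ≤ p 0 := by
          have := hsq.1.1; simpa using this
        have hb2 : p 0 < ((((nA a 0 - 1)/2 : ℕ):ℝ) + 1) * sA a 1 := hS
        have hlt : (c'.1:ℝ) * sA a 1 < ((((nA a 0 - 1)/2 : ℕ):ℝ) + 1) * sA a 1 := by nlinarith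
        have hlt2 : (c'.1:ℝ) < (((nA a 0 - 1)/2 : ℕ):ℝ) + 1 := lt_of_mul_lt_mul_right
          (by simpa [mul_comm] using hlt) hs1.le
        have : c'.1 < (nA a 0 - 1)/2 + 1 := by exact_mod_cast hlt2
        omega
    have := hcompl_bound Bᶜ hBc
    rwa [compl_compl] at this
  -- lower bound on the left-hand side
  have hLHS : ENNReal.ofReal α ≤ ∫⁻ y, ENNReal.ofReal |u y - ubar| ∂μ := by
    have hAint : ∫⁻ y in A, ENNReal.ofReal |u y - ubar| ∂μ = ENNReal.ofReal ubar * μ A := by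
      have heq : ∀ y ∈ A, ENNReal.ofReal |u y - ubar| = ENNReal.ofReal ubar := by
        intro y hy
        have hy0 : ((y:Plane) 0) ≤ Lm := hy
        have hu0 : u y = 0 := by
          simp only [hu]
          rw [max_eq_left hy0, min_eq_right (by linarith), sub_self, zero_div]
        rw [hu0, zero_sub, abs_neg, abs_of_nonneg hubar0]
      rw [setLIntegral_congr_fun hAmeas heq, setLIntegral_const]
    have hBint : ∫⁻ y in B, ENNReal.ofReal |u y - ubar| ∂μ = ENNReal.ofReal (1-ubar) * μ B := by
      have heq : ∀ y ∈ B, ENNReal.ofReal |u y - ubar| = ENNReal.ofReal (1-ubar) := by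
        intro y hy
        have hy0 : Lm + w ≤ ((y:Plane) 0) := hy
        have hu1 : u y = 1 := by
          simp only [hu]
          rw [max_eq_right (by linarith), min_eq_left (by linarith)]
          field_simp
          ring
        rw [hu1, abs_of_nonneg (by linarith)]
      rw [setLIntegral_congr_fun hBmeas heq, setLIntegral_const]
    calc ENNReal.ofReal α = ENNReal.ofReal (ubar * α) + ENNReal.ofReal ((1-ubar)*α) := by
          rw [← ENNReal.ofReal_add (by nlinarith) (by nlinarith)]
          congr 1; ring
      _ ≤ ENNReal.ofReal ubar * μ A + ENNReal.ofReal (1-ubar) * μ B := by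
          refine add_le_add ?_ ?_
          · rw [ENNReal.ofReal_mul hubar0]; exact mul_le_mul_right hμA _
          · rw [ENNReal.ofReal_mul (by linarith)]; exact mul_le_mul_right hμB _
      _ = (∫⁻ y in A, ENNReal.ofReal |u y - ubar| ∂μ) + ∫⁻ y in B, ENNReal.ofReal |u y - ubar| ∂μ := by
          rw [hAint, hBint]
      _ = ∫⁻ y in A ∪ B, ENNReal.ofReal |u y - ubar| ∂μ := (lintegral_union hBmeas hdisj).symm
      _ ≤ ∫⁻ y, ENNReal.ofReal |u y - ubar| ∂μ := lintegral_mono' Measure.restrict_le_self (le_refl _)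
  -- upper bound on the integral of ρ
  have hstrip : μ (Subtype.val ⁻¹' {p : Plane | Lm < p 0 ∧ p 0 < Lm + w}) ≤
      ((∏ j ∈ Finset.range m, (nA a j - 1) : ℕ) : ℝ≥0∞) * mass a m := by
    have hcb := cover_bound ha hμ m (fun i => i = Lam a m)
      {p : Plane | Lm < p 0 ∧ p 0 < Lm + w} ?_
    · refine le_trans hcb ?_
      have hfe : (cor a m).filter (fun c => c.1 = Lam a m) = CC a m := rfl
      rw [hfe]
      exact mul_le_mul_left (by exact_mod_cast card_CC ha m) _
    · intro c' hc' p hp hsq hS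
      have hs : (0:ℝ) < sA a m := s_pos ha m
      have hb1 : (c'.1:ℝ) * sA a m ≤ p 0 := by
        have := hsq.1.1; simpa using this
      have hb2 : p 0 ≤ (c'.1:ℝ) * sA a m + sA a m := by
        have := hsq.1.2; simpa using this
      have hS1 : (Lam a m:ℝ) * sA a m < p 0 := hS.1
      have hS2 : p 0 < (Lam a m:ℝ) * sA a m + sA a m := hS.2
      have hlt1 : (c'.1:ℝ) < (Lam a m:ℝ) + 1 := by
        have : (c'.1:ℝ) * sA a m < ((Lam a m:ℝ)+1) * sA a m := by nlinarith
        exact lt_of_mul_lt_mul_right (by simpa [mul_comm] using this) hs.le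
      have hlt2 : (Lam a m:ℝ) < (c'.1:ℝ) + 1 := by
        have : (Lam a m:ℝ) * sA a m < ((c'.1:ℝ)+1) * sA a m := by nlinarith
        exact lt_of_mul_lt_mul_right (by simpa [mul_comm] using this) hs.le
      have e1 : c'.1 < Lam a m + 1 := by exact_mod_cast hlt1
      have e2 : Lam a m < c'.1 + 1 := by exact_mod_cast hlt2
      omega
  have hρint : ∫⁻ y, ρ y ∂μ ≤
      ENNReal.ofReal ((∏ j ∈ Finset.range m, (nA a j:ℝ)) *
        ((∏ j ∈ Finset.range m, (nA a j - 1) : ℕ) : ℝ) *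
        (∏ j ∈ Finset.range m, (((nA a j:ℝ))^2 - 1)⁻¹)) := by
    have hw_inv : w⁻¹ = ∏ j ∈ Finset.range m, (nA a j:ℝ) := by
      rw [hwdef, s_eq ha m, inv_inv]
    calc ∫⁻ y, ρ y ∂μ
        = ENNReal.ofReal w⁻¹ * μ (Subtype.val ⁻¹' {p : Plane | Lm < p 0 ∧ p 0 < Lm + w}) := by
          rw [hρ, lintegral_indicator hstrip_meas, setLIntegral_const]
      _ ≤ ENNReal.ofReal w⁻¹ *
          (((∏ j ∈ Finset.range m, (nA a j - 1) : ℕ) : ℝ≥0∞) * mass a m) :=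
          mul_le_mul_right hstrip _
      _ = ENNReal.ofReal ((∏ j ∈ Finset.range m, (nA a j:ℝ)) *
            ((∏ j ∈ Finset.range m, (nA a j - 1) : ℕ) : ℝ) *
            (∏ j ∈ Finset.range m, (((nA a j:ℝ))^2 - 1)⁻¹)) := by
          rw [mass_eq ha m, ← ENNReal.ofReal_natCast (∏ j ∈ Finset.range m, (nA a j - 1)),
            ← ENNReal.ofReal_mul (by positivity), ← ENNReal.ofReal_mul (by positivity),
            hw_inv, mul_assoc]
  -- diameter bound
  have hdiam : diam (univ : Set ↥(carpet a)) ≤ 2 :=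
    diam_le_of_forall_dist_le (by norm_num) fun y _ z _ => (dist_lt_two y z).le
  -- final chain
  have hX : (∏ j ∈ Finset.range m, (nA a j:ℝ)) *
      ((∏ j ∈ Finset.range m, (nA a j - 1) : ℕ) : ℝ) *
      (∏ j ∈ Finset.range m, (((nA a j:ℝ))^2 - 1)⁻¹)
      ≤ Real.exp (-(∑ j ∈ Finset.range m, a j)/2) := key_prod ha m
  have hRHS : ENNReal.ofReal (C * diam (univ : Set ↥(carpet a))) * (∫⁻ y, ρ y ∂μ) ≤
      ENNReal.ofReal (2*C * Real.exp (-(∑ j ∈ Finset.range m, a j)/2)) := by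
    calc ENNReal.ofReal (C * diam (univ : Set ↥(carpet a))) * (∫⁻ y, ρ y ∂μ)
        ≤ ENNReal.ofReal (C * 2) *
          ENNReal.ofReal ((∏ j ∈ Finset.range m, (nA a j:ℝ)) *
            ((∏ j ∈ Finset.range m, (nA a j - 1) : ℕ) : ℝ) *
            (∏ j ∈ Finset.range m, (((nA a j:ℝ))^2 - 1)⁻¹)) := by
          refine mul_le_mul' (ENNReal.ofReal_le_ofReal ?_) hρint
          exact mul_le_mul_of_nonneg_left hdiam (by linarith)
      _ = ENNReal.ofReal ((C * 2) * ((∏ j ∈ Finset.range m, (nA a j:ℝ)) *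
            ((∏ j ∈ Finset.range m, (nA a j - 1) : ℕ) : ℝ) *
            (∏ j ∈ Finset.range m, (((nA a j:ℝ))^2 - 1)⁻¹))) :=
          (ENNReal.ofReal_mul (by linarith)).symm
      _ ≤ ENNReal.ofReal (2*C * Real.exp (-(∑ j ∈ Finset.range m, a j)/2)) := by
          refine ENNReal.ofReal_le_ofReal ?_
          have h2C : C * 2 = 2 * C := by ring
          rw [h2C]
          exact mul_le_mul_of_nonneg_left hX (by linarith)
  have final : ENNReal.ofReal α ≤
      ENNReal.ofReal (2*C*Real.exp (-(∑ j ∈ Finset.range m, a j)/2)) :=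
    le_trans hLHS (le_trans key hRHS)
  have hfin : α ≤ 2*C*Real.exp (-(∑ j ∈ Finset.range m, a j)/2) :=
    (ENNReal.ofReal_le_ofReal_iff (by positivity)).1 final
  linarith

end CarpetAux

/-- If `a ∉ ℓ¹`, then `S_a` does not support a `1`-Poincaré inequality. -/
theorem carpet_not_supportsPoincare_one_of_not_summable (a : ℕ → ℝ) (ha : GoodSeq a)
    (h : ¬ Summable a) (μ : Measure ↥(carpet a)) (hμ : IsNaturalMeasure a μ) :
    ¬ SupportsPoincare μ 1 :=
  CarpetAux.main a ha h μ hμ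

end
end

section
/- Let a = (a_1, a_2, …) be a sequence in which each a_m is the reciprocal of an odd integer at least 3, let S_a ⊂ ℝ² be the associated carpet with natural measure μ. For r > 0 let m(r) be the smallest integer m ≥ 0 with s_m ≤ r, and define h(r) = r² ∏_{j=1}^{m(r)} (1 − a_j²)^{−1}. Then there exist absolute constants 0 < c ≤ C (independent of a, x and r) such that for every x ∈ S_a and every 0 < r ≤ 1, c · h(r) ≤ μ(B(x,r)) ≤ C · h(r). -/
open MeasureTheory Metric Set Filter
open scoped ENNReal NNReal Topology

set_option maxHeartbeats 1000000

noncomputable section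

/-- `mIndex a r` is `m(r)`, the smallest integer `m ≥ 0` with `s_m ≤ r`. -/
def mIndex (a : ℕ → ℝ) (r : ℝ) : ℕ := sInf {m : ℕ | sA a m ≤ r}

section Aux

variable {a : ℕ → ℝ}

lemma GoodSeq.nA_spec (ha : GoodSeq a) (m : ℕ) :
    ∃ k : ℕ, 1 ≤ k ∧ nA a m = 2 * k + 1 ∧ a m = ((2 * k + 1 : ℕ) : ℝ)⁻¹ := by
  obtain ⟨k, hk, hak⟩ := ha m
  refine ⟨k, hk, ?_, hak⟩
  have h1 : (0:ℝ) < (2 * k + 1 : ℕ) := by positivity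
  have : (a m)⁻¹ = ((2 * k + 1 : ℕ) : ℝ) := by rw [hak, inv_inv]
  rw [nA, this, Nat.floor_natCast]

lemma GoodSeq.a_pos (ha : GoodSeq a) (m : ℕ) : 0 < a m := by
  obtain ⟨k, _, _, hak⟩ := ha.nA_spec m
  rw [hak]; positivity

lemma GoodSeq.a_le (ha : GoodSeq a) (m : ℕ) : a m ≤ 3⁻¹ := by
  obtain ⟨k, hk, _, hak⟩ := ha.nA_spec m
  rw [hak]
  have h3 : (3:ℝ) ≤ ((2 * k + 1 : ℕ) : ℝ) := by
    have : (3:ℕ) ≤ 2 * k + 1 := by omega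
    exact_mod_cast this
  exact inv_anti₀ (by norm_num) h3

lemma GoodSeq.nA_mul_a (ha : GoodSeq a) (m : ℕ) : (nA a m : ℝ) * a m = 1 := by
  obtain ⟨k, _, hn, hak⟩ := ha.nA_spec m
  rw [hn, hak]
  push_cast
  rw [mul_inv_cancel₀]
  positivity

lemma GoodSeq.nA_ge (ha : GoodSeq a) (m : ℕ) : 3 ≤ nA a m := by
  obtain ⟨k, hk, hn, _⟩ := ha.nA_spec m
  omega

lemma sA_zero : sA a 0 = 1 := by simp [sA]

lemma sA_succ (m : ℕ) : sA a (m + 1) = sA a m * a m := by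
  rw [sA, sA, Finset.prod_range_succ]

lemma GoodSeq.sA_pos (ha : GoodSeq a) (m : ℕ) : 0 < sA a m :=
  Finset.prod_pos fun j _ => ha.a_pos j

lemma GoodSeq.sA_le_pow (ha : GoodSeq a) (m : ℕ) : sA a m ≤ 3⁻¹ ^ m := by
  induction m with
  | zero => simp [sA_zero]
  | succ m ih =>
      rw [sA_succ, pow_succ]
      exact mul_le_mul ih (ha.a_le m) (ha.a_pos m).le (by positivity)

lemma GoodSeq.sA_le_one (ha : GoodSeq a) (m : ℕ) : sA a m ≤ 1 := by
  calc sA a m ≤ 3⁻¹ ^ m := ha.sA_le_pow m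
  _ ≤ 1 := pow_le_one₀ (by norm_num) (by norm_num)

lemma GoodSeq.sA_eq_nA_mul (ha : GoodSeq a) (m : ℕ) :
    sA a m = (nA a m : ℝ) * sA a (m + 1) := by
  rw [sA_succ]
  rw [show (nA a m : ℝ) * (sA a m * a m) = ((nA a m : ℝ) * a m) * sA a m by ring,
    ha.nA_mul_a, one_mul]

lemma GoodSeq.sA_succ_le (ha : GoodSeq a) (m : ℕ) : sA a (m+1) ≤ sA a m * 3⁻¹ := by
  rw [sA_succ]
  exact mul_le_mul_of_nonneg_left (ha.a_le m) (ha.sA_pos m).le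

lemma GoodSeq.sA_anti (ha : GoodSeq a) {m m' : ℕ} (h : m ≤ m') : sA a m' ≤ sA a m := by
  induction m' with
  | zero => simp_all
  | succ n ih =>
      rcases Nat.lt_or_ge m (n+1) with h'|h'
      · have := ih (by omega)
        calc sA a (n+1) ≤ sA a n * 3⁻¹ := ha.sA_succ_le n
        _ ≤ sA a n := by nlinarith [ha.sA_pos n]
        _ ≤ sA a m := this
      · have : m = n + 1 := by omega
        simp [this]



/-- `mIndex` material -/
def mIndexSet (a : ℕ → ℝ) (r : ℝ) : Set ℕ := {m : ℕ | sA a m ≤ r}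

lemma GoodSeq.mIndexSet_nonempty (ha : GoodSeq a) {r : ℝ} (hr : 0 < r) :
    {m : ℕ | sA a m ≤ r}.Nonempty := by
  obtain ⟨n, hn⟩ := exists_pow_lt_of_lt_one hr (show (3:ℝ)⁻¹ < 1 by norm_num)
  exact ⟨n, le_trans (ha.sA_le_pow n) hn.le⟩

lemma GoodSeq.sA_mIndex_le (ha : GoodSeq a) {r : ℝ} (hr : 0 < r) :
    sA a (sInf {m : ℕ | sA a m ≤ r}) ≤ r :=
  Nat.sInf_mem (ha.mIndexSet_nonempty hr)

lemma GoodSeq.lt_sA_of_lt_mIndex (ha : GoodSeq a) {r : ℝ} {k : ℕ}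
    (hk : k < sInf {m : ℕ | sA a m ≤ r}) : r < sA a k := by
  by_contra h
  push_neg at h
  have : sInf {m : ℕ | sA a m ≤ r} ≤ k := Nat.sInf_le (show k ∈ {m : ℕ | sA a m ≤ r} from h)
  omega

/-- mass of a level `m` square -/
def massA (a : ℕ → ℝ) (m : ℕ) : ℝ := ∏ j ∈ Finset.range m, ((a j)⁻¹ ^ 2 - 1)⁻¹

lemma GoodSeq.one_lt_inv_sq (ha : GoodSeq a) (j : ℕ) : 1 < (a j)⁻¹ ^ 2 := by
  have h1 : (3:ℝ) ≤ (a j)⁻¹ := by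
    rw [show (3:ℝ) = (3⁻¹)⁻¹ by norm_num]
    exact inv_anti₀ (ha.a_pos j) (ha.a_le j)
  nlinarith

lemma GoodSeq.massA_pos (ha : GoodSeq a) (m : ℕ) : 0 < massA a m :=
  Finset.prod_pos fun j _ => inv_pos.mpr (by linarith [ha.one_lt_inv_sq j])

lemma GoodSeq.a_sq_lt_one (ha : GoodSeq a) (j : ℕ) : a j ^ 2 < 1 := by
  have h1 := ha.a_pos j
  have h2 := ha.a_le j
  nlinarith

lemma GoodSeq.massA_eq (ha : GoodSeq a) (m : ℕ) :
    massA a m = sA a m ^ 2 * ∏ j ∈ Finset.range m, (1 - a j ^ 2)⁻¹ := by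
  rw [massA, sA, ← Finset.prod_pow, ← Finset.prod_mul_distrib]
  refine Finset.prod_congr rfl fun j _ => ?_
  have hp := ha.a_pos j
  have hs := ha.a_sq_lt_one j
  rw [show (a j)⁻¹ ^ 2 - 1 = (1 - a j ^ 2) / a j ^ 2 by
    field_simp]
  rw [inv_div]
  rw [div_eq_mul_inv]

lemma GoodSeq.massA_succ (ha : GoodSeq a) (m : ℕ) :
    massA a (m + 1) = massA a m * (((nA a m : ℝ)) ^ 2 - 1)⁻¹ := by
  rw [massA, massA, Finset.prod_range_succ]
  congr 2
  obtain ⟨k, _, hn, hak⟩ := ha.nA_spec m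
  rw [hn, hak, inv_inv]

lemma prod_ge_one_real {s : Finset ℕ} {f : ℕ → ℝ} (h : ∀ i ∈ s, 1 ≤ f i) :
    1 ≤ ∏ i ∈ s, f i := by
  calc (1:ℝ) = ∏ _i ∈ s, 1 := by simp
  _ ≤ ∏ i ∈ s, f i := Finset.prod_le_prod (by intros; norm_num) h

lemma GoodSeq.one_sub_sq_pos (ha : GoodSeq a) (j : ℕ) : 0 < 1 - a j ^ 2 := by
  have h1 := ha.a_sq_lt_one j
  nlinarith

lemma GoodSeq.one_le_inv_one_sub_sq (ha : GoodSeq a) (j : ℕ) : 1 ≤ (1 - a j ^ 2)⁻¹ := by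
  have h1 := ha.one_sub_sq_pos j
  have h2 := ha.a_pos j
  have := inv_anti₀ h1 (show 1 - a j ^ 2 ≤ 1 by nlinarith)
  simpa using this

lemma GoodSeq.prod_one_sub_sq_inv_ge_one (ha : GoodSeq a) (m : ℕ) :
    1 ≤ ∏ j ∈ Finset.range m, (1 - a j ^ 2)⁻¹ := by
  exact prod_ge_one_real fun j _ => ha.one_le_inv_one_sub_sq j

lemma GoodSeq.massA_le (ha : GoodSeq a) (m : ℕ) :
    massA a m ≤ (9/8 : ℝ) ^ m * sA a m ^ 2 := by
  rw [ha.massA_eq m, mul_comm]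
  refine mul_le_mul_of_nonneg_right ?_ (sq_nonneg _)
  calc ∏ j ∈ Finset.range m, (1 - a j ^ 2)⁻¹
      ≤ ∏ j ∈ Finset.range m, (9/8 : ℝ) := by
        refine Finset.prod_le_prod (fun j _ => inv_nonneg.mpr (ha.one_sub_sq_pos j).le)
          (fun j _ => ?_)
        have h2 : a j ^ 2 ≤ 9⁻¹ := by
          have := ha.a_pos j; have := ha.a_le j; nlinarith
        calc (1 - a j ^ 2)⁻¹ ≤ ((8:ℝ)/9)⁻¹ :=
              inv_anti₀ (by norm_num) (by nlinarith)
        _ = 9/8 := by norm_num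
  _ = (9/8 : ℝ) ^ m := by rw [Finset.prod_const, Finset.card_range]

lemma GoodSeq.prod_anti (ha : GoodSeq a) {m m' : ℕ} (h : m ≤ m') :
    ∏ j ∈ Finset.range m, (1 - a j ^ 2)⁻¹ ≤ ∏ j ∈ Finset.range m', (1 - a j ^ 2)⁻¹ := by
  rw [← Finset.prod_range_mul_prod_Ico _ h]
  refine le_mul_of_one_le_right ?_ ?_
  · exact Finset.prod_nonneg fun j _ => inv_nonneg.mpr (ha.one_sub_sq_pos j).le
  · exact prod_ge_one_real fun j _ => ha.one_le_inv_one_sub_sq j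


lemma carpet_subset_precarpet (m : ℕ) : carpet a ⊆ precarpet a m :=
  Set.iInter_subset _ m

lemma mem_precarpet_iff {y : Plane} {m : ℕ} :
    y ∈ precarpet a m ↔ ∃ c ∈ corners a m, y ∈ csq c (sA a m) := by
  simp [precarpet]

/-- grid structure and bounds for corners -/
lemma GoodSeq.corners_grid (ha : GoodSeq a) {m : ℕ} {c : Plane} (hc : c ∈ corners a m) :
    (∃ p : ℕ, c 0 = p * sA a m) ∧ (∃ q : ℕ, c 1 = q * sA a m) ∧
      c 0 + sA a m ≤ 1 ∧ c 1 + sA a m ≤ 1 := by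
  induction m generalizing c with
  | zero =>
      obtain ⟨h0, h1⟩ := hc
      exact ⟨⟨0, by simp [h0]⟩, ⟨0, by simp [h1]⟩, by simp [h0, sA_zero], by simp [h1, sA_zero]⟩
  | succ m ih =>
      obtain ⟨c', hc', i, j, hi, hj, _, h0, h1⟩ := hc
      obtain ⟨⟨p, hp⟩, ⟨q, hq⟩, hb0, hb1⟩ := ih hc'
      have hs' : 0 < sA a (m+1) := ha.sA_pos (m+1)
      have hkey : sA a m = (nA a m : ℝ) * sA a (m+1) := ha.sA_eq_nA_mul m
      constructor
      · exact ⟨p * nA a m + i, by rw [h0, hp, hkey]; push_cast; ring⟩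
      refine ⟨⟨q * nA a m + j, by rw [h1, hq, hkey]; push_cast; ring⟩, ?_, ?_⟩
      · have : (i:ℝ) + 1 ≤ (nA a m : ℝ) := by exact_mod_cast Nat.succ_le_of_lt hi
        have : (i:ℝ) * sA a (m+1) + sA a (m+1) ≤ sA a m := by
          rw [hkey]; nlinarith
        rw [h0]; linarith
      · have : (j:ℝ) + 1 ≤ (nA a m : ℝ) := by exact_mod_cast Nat.succ_le_of_lt hj
        have : (j:ℝ) * sA a (m+1) + sA a (m+1) ≤ sA a m := by
          rw [hkey]; nlinarith
        rw [h1]; linarith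

lemma GoodSeq.corners_nonneg (ha : GoodSeq a) {m : ℕ} {c : Plane} (hc : c ∈ corners a m) :
    0 ≤ c 0 ∧ 0 ≤ c 1 := by
  obtain ⟨⟨p, hp⟩, ⟨q, hq⟩, -, -⟩ := ha.corners_grid hc
  have := ha.sA_pos m
  constructor
  · rw [hp]; positivity
  · rw [hq]; positivity

/-- Euclidean plane coordinate distance estimates. -/
lemma coord_dist_le (x y : Plane) (i : Fin 2) : |x i - y i| ≤ dist x y := by
  rw [EuclideanSpace.dist_eq, show |x i - y i| = Real.sqrt (dist (x i) (y i) ^ 2) by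
    rw [Real.sqrt_sq_eq_abs, Real.dist_eq, abs_abs]]
  exact Real.sqrt_le_sqrt (Finset.single_le_sum (f := fun j => dist (x j) (y j) ^ 2)
    (fun j _ => sq_nonneg _) (Finset.mem_univ i))

lemma dist_lt_of_coords {x y : Plane} {r : ℝ} (hr : 0 < r)
    (h0 : |y 0 - x 0| ≤ r / 2) (h1 : |y 1 - x 1| ≤ r / 2) : dist y x < r := by
  rw [EuclideanSpace.dist_eq, Fin.sum_univ_two]
  have e0 : dist (y 0) (x 0) = |y 0 - x 0| := Real.dist_eq _ _
  have e1 : dist (y 1) (x 1) = |y 1 - x 1| := Real.dist_eq _ _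
  rw [e0, e1]
  have k0 : |y 0 - x 0| ^ 2 ≤ (r/2) ^ 2 := by
    apply sq_le_sq' <;> [linarith [abs_nonneg (y 0 - x 0), neg_abs_le (y 0 - x 0)];
      linarith [le_abs_self (y 0 - x 0)]]
  have k1 : |y 1 - x 1| ^ 2 ≤ (r/2) ^ 2 := by
    apply sq_le_sq' <;> [linarith [abs_nonneg (y 1 - x 1), neg_abs_le (y 1 - x 1)];
      linarith [le_abs_self (y 1 - x 1)]]
  have : |y 0 - x 0| ^ 2 + |y 1 - x 1| ^ 2 < r ^ 2 := by nlinarith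
  calc Real.sqrt (|y 0 - x 0| ^ 2 + |y 1 - x 1| ^ 2) < Real.sqrt (r ^ 2) := by
        apply Real.sqrt_lt_sqrt (by positivity) this
  _ = r := Real.sqrt_sq hr.le

/-- a closed square of side `s` all of whose points are within `r/2` of `x` in each
coordinate is inside `ball x r`. -/
lemma csq_subset_ball {v x : Plane} {s r : ℝ} (hr : 0 < r) (hs : 0 ≤ s)
    (h0 : |v 0 - x 0| ≤ r/2 ∧ |v 0 + s - x 0| ≤ r/2)
    (h1 : |v 1 - x 1| ≤ r/2 ∧ |v 1 + s - x 1| ≤ r/2) :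
    csq v s ⊆ Metric.ball x r := by
  intro y hy
  obtain ⟨hy0, hy1⟩ := hy
  rw [Metric.mem_ball]
  obtain ⟨ha0, hb0⟩ := h0
  obtain ⟨ha1, hb1⟩ := h1
  rw [abs_le] at ha0 hb0 ha1 hb1
  refine dist_lt_of_coords hr ?_ ?_
  · rw [abs_le]
    exact ⟨by linarith [hy0.1], by linarith [hy0.2]⟩
  · rw [abs_le]
    exact ⟨by linarith [hy1.1], by linarith [hy1.2]⟩


def pt (u v : ℝ) : Plane := (WithLp.equiv 2 (Fin 2 → ℝ)).symm ![u, v]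

@[simp] lemma pt_zero (u v : ℝ) : pt u v 0 = u := rfl
@[simp] lemma pt_one (u v : ℝ) : pt u v 1 = v := rfl

lemma plane_ext {x y : Plane} (h0 : x 0 = y 0) (h1 : x 1 = y 1) : x = y := by
  ext d
  fin_cases d <;> assumption

lemma corners_finite (a : ℕ → ℝ) (m : ℕ) : (corners a m).Finite := by
  induction m with
  | zero =>
      have : corners a 0 = {pt 0 0} := by
        ext p
        constructor
        · rintro ⟨h0, h1⟩
          exact plane_ext (by simp [h0]) (by simp [h1])
        · rintro rfl
          exact ⟨rfl, rfl⟩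
      rw [this]; exact Set.finite_singleton _
  | succ m ih =>
      have hsub : corners a (m+1) ⊆
          (fun x : Plane × ℕ × ℕ => pt (x.1 0 + x.2.1 * sA a (m+1)) (x.1 1 + x.2.2 * sA a (m+1))) ''
            (corners a m ×ˢ (Set.Iio (nA a m) ×ˢ Set.Iio (nA a m))) := by
        rintro p ⟨c, hc, i, j, hi, hj, _, h0, h1⟩
        exact ⟨(c, i, j), ⟨hc, hi, hj⟩, (plane_ext (by simp [h0]) (by simp [h1])).symm⟩
      exact Set.Finite.subset (Set.Finite.image _ (ih.prod ((Set.finite_Iio _).prod (Set.finite_Iio _)))) hsub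

variable {μ : Measure ↥(carpet a)}

lemma IsNaturalMeasure.mu_csq (hμ : IsNaturalMeasure a μ) {m : ℕ} {c : Plane}
    (hc : c ∈ corners a m) :
    μ (Subtype.val ⁻¹' csq c (sA a m)) = ENNReal.ofReal (massA a m) :=
  hμ.2 m c hc

/-- covering bound: if every level-`m` corner square meeting `S` has its grid indices in `G`,
then `μ S ≤ |G| ⋅ mass`. -/
lemma IsNaturalMeasure.mu_le_card_mass (ha : GoodSeq a) (hμ : IsNaturalMeasure a μ)
    (m : ℕ) (S : Set Plane) (G : Finset (ℕ × ℕ))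
    (hcover : ∀ c ∈ corners a m, (csq c (sA a m) ∩ S).Nonempty →
      ∃ g ∈ G, c 0 = g.1 * sA a m ∧ c 1 = g.2 * sA a m) :
    μ (Subtype.val ⁻¹' S) ≤ G.card * ENNReal.ofReal (massA a m) := by
  classical
  have hs := ha.sA_pos m
  set F : Finset Plane := ((corners_finite a m).toFinset.filter
    (fun c => (csq c (sA a m) ∩ S).Nonempty)) with hF
  have hmemF : ∀ {c : Plane}, c ∈ F ↔ c ∈ corners a m ∧ (csq c (sA a m) ∩ S).Nonempty := by
    intro c
    simp [hF, Set.Finite.mem_toFinset]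
  have hcov2 : (Subtype.val ⁻¹' S : Set ↥(carpet a)) ⊆
      ⋃ c ∈ F, (Subtype.val ⁻¹' csq c (sA a m) : Set ↥(carpet a)) := by
    rintro y hy
    have hyc : (y : Plane) ∈ precarpet a m := carpet_subset_precarpet m y.2
    obtain ⟨c, hc, hyc'⟩ := mem_precarpet_iff.mp hyc
    have : c ∈ F := hmemF.mpr ⟨hc, ⟨y, hyc', hy⟩⟩
    exact Set.mem_biUnion this hyc'
  calc μ (Subtype.val ⁻¹' S) ≤ μ (⋃ c ∈ F, Subtype.val ⁻¹' csq c (sA a m)) := measure_mono hcov2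
  _ ≤ ∑ c ∈ F, μ (Subtype.val ⁻¹' csq c (sA a m)) := measure_biUnion_finset_le F _
  _ = ∑ c ∈ F, ENNReal.ofReal (massA a m) := by
      refine Finset.sum_congr rfl fun c hc => hμ.mu_csq (hmemF.mp hc).1
  _ = F.card * ENNReal.ofReal (massA a m) := by
      rw [Finset.sum_const, nsmul_eq_mul]
  _ ≤ G.card * ENNReal.ofReal (massA a m) := by
      gcongr
      have : F.card ≤ G.card := by
        refine Finset.card_le_card_of_injOn
          (fun c => (⌊c 0 / sA a m⌋₊, ⌊c 1 / sA a m⌋₊)) ?_ ?_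
        · intro c hc
          obtain ⟨hcm, hne⟩ := hmemF.mp hc
          obtain ⟨g, hg, h0, h1⟩ := hcover c hcm hne
          have e0 : ⌊c 0 / sA a m⌋₊ = g.1 := by
            rw [h0, mul_div_assoc, div_self hs.ne', mul_one, Nat.floor_natCast]
          have e1 : ⌊c 1 / sA a m⌋₊ = g.2 := by
            rw [h1, mul_div_assoc, div_self hs.ne', mul_one, Nat.floor_natCast]
          dsimp only
          rw [e0, e1]
          exact hg
        · intro c hc c' hc' he
          obtain ⟨⟨p, hp⟩, ⟨q, hq⟩, -, -⟩ := ha.corners_grid (hmemF.mp hc).1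
          obtain ⟨⟨p', hp'⟩, ⟨q', hq'⟩, -, -⟩ := ha.corners_grid (hmemF.mp hc').1
          have e0 : ⌊c 0 / sA a m⌋₊ = p := by
            rw [hp, mul_div_assoc, div_self hs.ne', mul_one, Nat.floor_natCast]
          have e0' : ⌊c' 0 / sA a m⌋₊ = p' := by
            rw [hp', mul_div_assoc, div_self hs.ne', mul_one, Nat.floor_natCast]
          have e1 : ⌊c 1 / sA a m⌋₊ = q := by
            rw [hq, mul_div_assoc, div_self hs.ne', mul_one, Nat.floor_natCast]
          have e1' : ⌊c' 1 / sA a m⌋₊ = q' := by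
            rw [hq', mul_div_assoc, div_self hs.ne', mul_one, Nat.floor_natCast]
          have hpp : p = p' := by
            have := congrArg Prod.fst he
            simpa [e0, e0'] using this
          have hqq : q = q' := by
            have := congrArg Prod.snd he
            simpa [e1, e1'] using this
          exact plane_ext (by rw [hp, hp', hpp]) (by rw [hq, hq', hqq])
      exact_mod_cast this

/-- horizontal and vertical lines are `μ`-null. -/
lemma IsNaturalMeasure.mu_line (ha : GoodSeq a) (hμ : IsNaturalMeasure a μ)
    (d : Fin 2) (t : ℝ) :
    μ (Subtype.val ⁻¹' {p : Plane | p d = t}) = 0 := by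
  classical
  have key : ∀ M : ℕ, μ (Subtype.val ⁻¹' {p : Plane | p d = t}) ≤
      ENNReal.ofReal (4 * (3/8 : ℝ) ^ M) := by
    intro M
    have hs := ha.sA_pos M
    set s := sA a M with hs_def
    set N : ℕ := ⌊s⁻¹⌋₊ with hN
    set T : ℕ := ⌊t / s⌋₊ with hT
    set Gc : Finset ℕ := Finset.Icc (T - 1) T with hGc
    set Gf : Finset ℕ := Finset.range (N + 1) with hGf
    set G : Finset (ℕ × ℕ) := if d = 0 then Gc ×ˢ Gf else Gf ×ˢ Gc with hG
    have hGccard : Gc.card ≤ 2 := by rw [hGc, Nat.card_Icc]; omega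
    have hGfcard : Gf.card = N + 1 := by rw [hGf, Finset.card_range]
    have hcard : G.card ≤ 2 * (N + 1) := by
      rcases eq_or_ne d 0 with hd | hd
      · rw [hG, if_pos hd, Finset.card_product, hGfcard]
        exact Nat.mul_le_mul_right _ hGccard
      · rw [hG, if_neg hd, Finset.card_product, hGfcard]
        calc (N+1) * Gc.card ≤ (N+1) * 2 := Nat.mul_le_mul_left _ hGccard
        _ = 2 * (N+1) := by ring
    have hfree : ∀ u : ℕ, (u : ℝ) * s + s ≤ 1 → u ∈ Gf := by
      intro u hu
      rw [hGf, Finset.mem_range]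
      have h1 : (u : ℝ) * s < 1 := by nlinarith
      have h2 : (u : ℝ) < s⁻¹ := by
        rw [← one_div]
        rw [lt_div_iff₀ hs]
        linarith
      have h3 : s⁻¹ < (N : ℝ) + 1 := Nat.lt_floor_add_one s⁻¹
      have : (u : ℝ) < (N : ℝ) + 1 := lt_trans h2 h3
      exact_mod_cast this
    have hconstr : ∀ u : ℕ, (u : ℝ) * s ≤ t → t ≤ (u : ℝ) * s + s → u ∈ Gc := by
      intro u h1 h2
      rw [hGc, Finset.mem_Icc]
      have hle : u ≤ T := by
        apply Nat.le_floor
        rw [le_div_iff₀ hs]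
        linarith [h1]
      have hge : T ≤ u + 1 := by
        have : t / s ≤ (u : ℝ) + 1 := by
          rw [div_le_iff₀ hs]
          nlinarith
        have := Nat.floor_le_floor this
        rwa [show ⌊(u : ℝ) + 1⌋₊ = u + 1 by
          rw [show ((u : ℝ) + 1) = ((u + 1 : ℕ) : ℝ) by push_cast; ring, Nat.floor_natCast]] at this
      omega
    have hcover : ∀ c ∈ corners a M, (csq c s ∩ {p : Plane | p d = t}).Nonempty →
        ∃ g ∈ G, c 0 = g.1 * s ∧ c 1 = g.2 * s := by
      rintro c hc ⟨y, hy, hyt⟩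
      obtain ⟨⟨p, hp⟩, ⟨q, hq⟩, hb0, hb1⟩ := ha.corners_grid hc
      simp only [Set.mem_setOf_eq] at hyt
      obtain ⟨hy0, hy1⟩ := hy
      fin_cases d
      · refine ⟨(p, q), ?_, hp, hq⟩
        have hGeq : G = Gc ×ˢ Gf := by rw [hG, if_pos]; rfl
        rw [hGeq, Finset.mem_product]
        constructor
        · exact hconstr p (by rw [← hp, ← hyt]; exact hy0.1) (by rw [← hp, ← hyt]; exact hy0.2)
        · exact hfree q (by rw [← hq]; exact hb1)
      · refine ⟨(p, q), ?_, hp, hq⟩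
        have hGeq : G = Gf ×ˢ Gc := by rw [hG, if_neg]; decide
        rw [hGeq, Finset.mem_product]
        constructor
        · exact hfree p (by rw [← hp]; exact hb0)
        · exact hconstr q (by rw [← hq, ← hyt]; exact hy1.1) (by rw [← hq, ← hyt]; exact hy1.2)
    calc μ (Subtype.val ⁻¹' {p : Plane | p d = t})
        ≤ G.card * ENNReal.ofReal (massA a M) := hμ.mu_le_card_mass ha M _ G hcover
    _ ≤ (2 * (N + 1) : ℕ) * ENNReal.ofReal (massA a M) :=
        mul_le_mul_left (by exact_mod_cast hcard) _
    _ = ENNReal.ofReal ((2 * (N + 1) : ℕ) * massA a M) := by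
        rw [ENNReal.ofReal_mul (by positivity), ENNReal.ofReal_natCast]
    _ ≤ ENNReal.ofReal (4 * (3/8 : ℝ) ^ M) := by
        apply ENNReal.ofReal_le_ofReal
        have hmass := ha.massA_le M
        have hNle : (N : ℝ) ≤ s⁻¹ := Nat.floor_le (by positivity)
        have hs1 : s ≤ 1 := ha.sA_le_one M
        have hsinv : 1 ≤ s⁻¹ := by
          rw [le_inv_comm₀ one_pos hs]
          simpa using hs1
        have hcN : ((2 * (N + 1) : ℕ) : ℝ) ≤ 4 * s⁻¹ := by
          push_cast
          linarith
        have hmass' : massA a M ≤ (9/8 : ℝ) ^ M * s ^ 2 := hmass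
        have hmp : 0 < massA a M := ha.massA_pos M
        calc ((2 * (N + 1) : ℕ) : ℝ) * massA a M ≤ (4 * s⁻¹) * ((9/8 : ℝ) ^ M * s ^ 2) := by
              apply mul_le_mul hcN hmass' hmp.le (by positivity)
        _ = 4 * (9/8 : ℝ) ^ M * s := by
              field_simp
        _ ≤ 4 * (9/8 : ℝ) ^ M * (3⁻¹ : ℝ) ^ M :=
              mul_le_mul_of_nonneg_left (ha.sA_le_pow M) (by positivity)
        _ = 4 * (3/8 : ℝ) ^ M := by
              rw [mul_assoc, ← mul_pow]
              norm_num
  have hlim : Tendsto (fun M : ℕ => ENNReal.ofReal (4 * (3/8 : ℝ) ^ M)) atTop (𝓝 0) := by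
    rw [show (0 : ℝ≥0∞) = ENNReal.ofReal 0 by simp]
    apply ENNReal.tendsto_ofReal
    have : Tendsto (fun M : ℕ => (3/8 : ℝ) ^ M) atTop (𝓝 0) :=
      tendsto_pow_atTop_nhds_zero_of_lt_one (by norm_num) (by norm_num)
    simpa using this.const_mul 4
  exact le_antisymm (ge_of_tendsto' hlim key) (by positivity)


lemma isClosed_csq (c : Plane) (s : ℝ) : IsClosed (csq c s) := by
  have h0 : IsClosed ((fun p : Plane => p 0) ⁻¹' Icc (c 0) (c 0 + s)) :=
    isClosed_Icc.preimage (PiLp.continuous_apply 2 _ 0)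
  have h1 : IsClosed ((fun p : Plane => p 1) ⁻¹' Icc (c 1) (c 1 + s)) :=
    isClosed_Icc.preimage (PiLp.continuous_apply 2 _ 1)
  exact h0.inter h1

lemma measurable_pre_csq (c : Plane) (s : ℝ) :
    MeasurableSet (Subtype.val ⁻¹' csq c s : Set ↥(carpet a)) :=
  measurable_subtype_coe (isClosed_csq c s).measurableSet

/-- lower bound: a finite family of corner squares inside `B` contributes its total mass. -/
lemma IsNaturalMeasure.card_mass_le_mu (ha : GoodSeq a) (hμ : IsNaturalMeasure a μ)
    {m : ℕ} {B : Set Plane} {F : Finset (ℕ × ℕ)} (c₀ : Plane) (cf : ℕ × ℕ → Plane)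
    (hcoord : ∀ g : ℕ × ℕ, cf g 0 = c₀ 0 + g.1 * sA a m ∧ cf g 1 = c₀ 1 + g.2 * sA a m)
    (hmem : ∀ g ∈ F, cf g ∈ corners a m)
    (hsub : ∀ g ∈ F, csq (cf g) (sA a m) ⊆ B) :
    (F.card : ℝ≥0∞) * ENNReal.ofReal (massA a m) ≤ μ (Subtype.val ⁻¹' B) := by
  classical
  set s := sA a m with hsdef
  have hs := ha.sA_pos m
  -- case analysis helper: separated squares intersect in a null line
  have main : ∀ u v : Plane,
      (u 0 + s ≤ v 0) ∨ (v 0 + s ≤ u 0) ∨ (u 1 + s ≤ v 1) ∨ (v 1 + s ≤ u 1) →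
      μ ((Subtype.val ⁻¹' csq u s) ∩ (Subtype.val ⁻¹' csq v s)) = 0 := by
    intro u v hcase
    rcases hcase with h | h | h | h
    · refine measure_mono_null ?_ (hμ.mu_line ha 0 (v 0))
      rintro y ⟨⟨hy0u, _⟩, ⟨hy0v, _⟩⟩
      have : (y : Plane) 0 = v 0 := le_antisymm (by linarith [hy0u.2, hy0v.1]) hy0v.1
      exact this
    · refine measure_mono_null ?_ (hμ.mu_line ha 0 (u 0))
      rintro y ⟨⟨hy0u, _⟩, ⟨hy0v, _⟩⟩
      exact le_antisymm (by linarith [hy0v.2, hy0u.1]) hy0u.1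
    · refine measure_mono_null ?_ (hμ.mu_line ha 1 (v 1))
      rintro y ⟨⟨_, hy1u⟩, ⟨_, hy1v⟩⟩
      exact le_antisymm (by linarith [hy1u.2, hy1v.1]) hy1v.1
    · refine measure_mono_null ?_ (hμ.mu_line ha 1 (u 1))
      rintro y ⟨⟨_, hy1u⟩, ⟨_, hy1v⟩⟩
      exact le_antisymm (by linarith [hy1v.2, hy1u.1]) hy1u.1
  have hdisj : (F : Set (ℕ × ℕ)).Pairwise
      (Function.onFun (AEDisjoint μ) fun g => (Subtype.val ⁻¹' csq (cf g) s : Set ↥(carpet a))) := by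
    intro g _ g' _ hne
    have hco := hcoord g
    have hco' := hcoord g'
    have hfs : g.1 ≠ g'.1 ∨ g.2 ≠ g'.2 := by
      by_contra hcon
      push_neg at hcon
      exact hne (Prod.ext hcon.1 hcon.2)
    apply main
    rcases hfs with h | h
    · rcases lt_or_gt_of_ne h with hlt | hgt
      · left
        rw [hco.1, hco'.1]
        have : (g.1 : ℝ) + 1 ≤ (g'.1 : ℝ) := by exact_mod_cast hlt
        nlinarith
      · right; left
        rw [hco.1, hco'.1]
        have : (g'.1 : ℝ) + 1 ≤ (g.1 : ℝ) := by exact_mod_cast hgt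
        nlinarith
    · rcases lt_or_gt_of_ne h with hlt | hgt
      · right; right; left
        rw [hco.2, hco'.2]
        have : (g.2 : ℝ) + 1 ≤ (g'.2 : ℝ) := by exact_mod_cast hlt
        nlinarith
      · right; right; right
        rw [hco.2, hco'.2]
        have : (g'.2 : ℝ) + 1 ≤ (g.2 : ℝ) := by exact_mod_cast hgt
        nlinarith
  have hmeas : ∀ g ∈ F, NullMeasurableSet
      (Subtype.val ⁻¹' csq (cf g) s : Set ↥(carpet a)) μ :=
    fun g _ => (measurable_pre_csq _ _).nullMeasurableSet
  have hunion : μ (⋃ g ∈ F, (Subtype.val ⁻¹' csq (cf g) s : Set ↥(carpet a))) =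
      ∑ g ∈ F, μ (Subtype.val ⁻¹' csq (cf g) s) :=
    measure_biUnion_finset₀ hdisj hmeas
  calc (F.card : ℝ≥0∞) * ENNReal.ofReal (massA a m)
      = ∑ g ∈ F, μ (Subtype.val ⁻¹' csq (cf g) s) := by
        rw [Finset.sum_congr rfl (fun g hg => hμ.mu_csq (hmem g hg)), Finset.sum_const,
          nsmul_eq_mul]
  _ = μ (⋃ g ∈ F, (Subtype.val ⁻¹' csq (cf g) s : Set ↥(carpet a))) := hunion.symm
  _ ≤ μ (Subtype.val ⁻¹' B) := by
      apply measure_mono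
      refine Set.iUnion₂_subset fun g hg => ?_
      exact fun y hy => hsub g hg hy

lemma ball_subtype_eq (x : ↥(carpet a)) (r : ℝ) :
    Metric.ball x r = (Subtype.val ⁻¹' Metric.ball (x : Plane) r : Set ↥(carpet a)) := by
  ext y
  simp [Metric.mem_ball, Subtype.dist_eq]


/-- cast of truncated subtraction -/
lemma cast_sub_le_cast (b a : ℕ) : (b : ℝ) - a ≤ ((b - a : ℕ) : ℝ) := by
  rcases le_total a b with h | h
  · rw [Nat.cast_sub h]
  · have h1 : b - a = 0 := Nat.sub_eq_zero_of_le h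
    rw [h1]
    have : (b : ℝ) ≤ (a : ℝ) := by exact_mod_cast h
    simpa using this

/-- 1-D block of at least `r/(4s')` full grid cells of size `s'` within distance `r/2`
of the point `u ∈ [0, L]`, inside `[0, L]` with `L = n s'` and `r ≤ L`. -/
lemma block_exists {s' L u r : ℝ} {n : ℕ} (hs' : 0 < s') (hL : L = n * s')
    (hu0 : 0 ≤ u) (huL : u ≤ L) (hrL : r ≤ L) (hr8 : 8 * s' ≤ r) :
    ∃ A : Finset ℕ,
      (∀ i ∈ A, i < n ∧ ∀ ξ : ℝ, (i : ℝ) * s' ≤ ξ → ξ ≤ (i : ℝ) * s' + s' → |ξ - u| ≤ r / 2) ∧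
      r / (4 * s') ≤ A.card := by
  have hr : 0 < r := by linarith
  rcases le_or_gt (r / 2) (L - u) with hroom | hroom
  · -- room on the right : cells inside [u, u + r/2]
    set i₀ := ⌈u / s'⌉₊ with hi₀
    set i₁ := ⌊(u + r / 2) / s'⌋₊ with hi₁
    have hfl : (i₁ : ℝ) ≤ (u + r/2) / s' := Nat.floor_le (by positivity)
    have hfl' : (u + r/2) / s' - 1 < (i₁ : ℝ) := by
      have := Nat.lt_floor_add_one ((u + r/2) / s')
      linarith
    have hcl : u / s' ≤ (i₀ : ℝ) := Nat.le_ceil _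
    have hcl' : (i₀ : ℝ) < u / s' + 1 := Nat.ceil_lt_add_one (by positivity)
    refine ⟨Finset.Ico i₀ i₁, fun i hi => ?_, ?_⟩
    · rw [Finset.mem_Ico] at hi
      have h1 : u ≤ (i : ℝ) * s' := by
        have h := mul_le_mul_of_nonneg_right
          (le_trans hcl (show (i₀ : ℝ) ≤ i by exact_mod_cast hi.1)) hs'.le
        rwa [div_mul_cancel₀ _ hs'.ne'] at h
      have h2 : (i : ℝ) * s' + s' ≤ u + r / 2 := by
        have hii : (i : ℝ) + 1 ≤ (i₁ : ℝ) := by exact_mod_cast hi.2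
        calc (i : ℝ) * s' + s' = ((i : ℝ) + 1) * s' := by ring
        _ ≤ ((u + r/2) / s') * s' := mul_le_mul_of_nonneg_right (le_trans hii hfl) hs'.le
        _ = u + r / 2 := div_mul_cancel₀ _ hs'.ne'
      constructor
      · have hle : (i : ℝ) * s' + s' ≤ L := by linarith
        rw [hL] at hle
        have hni : ((i : ℝ) + 1) * s' ≤ (n : ℝ) * s' := by nlinarith
        have : (i : ℝ) + 1 ≤ (n : ℝ) := le_of_mul_le_mul_right hni hs'
        exact_mod_cast this
      · intro ξ hξ1 hξ2
        rw [abs_le]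
        constructor <;> linarith
    · rw [Nat.card_Ico]
      have := cast_sub_le_cast i₁ i₀
      have hdiff : r / (2 * s') - 2 ≤ (i₁ : ℝ) - i₀ := by
        have e1 : (u + r/2) / s' - u / s' = r / (2 * s') := by
          field_simp
          ring
        nlinarith [hfl', hcl']
      have h48 : r / (4 * s') ≤ r / (2 * s') - 2 := by
        rw [div_sub' (by positivity), div_le_div_iff₀ (by positivity) (by positivity)]
        nlinarith
      linarith
  · -- room on the left : cells inside [u - r/2, u]
    have hur : r / 2 ≤ u := by linarith
    set i₀ := ⌈(u - r / 2) / s'⌉₊ with hi₀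
    set i₁ := ⌊u / s'⌋₊ with hi₁
    have hfl : (i₁ : ℝ) ≤ u / s' := Nat.floor_le (by positivity)
    have hfl' : u / s' - 1 < (i₁ : ℝ) := by
      have := Nat.lt_floor_add_one (u / s')
      linarith
    have hcl : (u - r/2) / s' ≤ (i₀ : ℝ) := Nat.le_ceil _
    have hcl' : (i₀ : ℝ) < (u - r/2) / s' + 1 :=
      Nat.ceil_lt_add_one (div_nonneg (by linarith) hs'.le)
    refine ⟨Finset.Ico i₀ i₁, fun i hi => ?_, ?_⟩
    · rw [Finset.mem_Ico] at hi
      have h1 : u - r / 2 ≤ (i : ℝ) * s' := by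
        have h := mul_le_mul_of_nonneg_right
          (le_trans hcl (show (i₀ : ℝ) ≤ i by exact_mod_cast hi.1)) hs'.le
        rwa [div_mul_cancel₀ _ hs'.ne'] at h
      have h2 : (i : ℝ) * s' + s' ≤ u := by
        have hii : (i : ℝ) + 1 ≤ (i₁ : ℝ) := by exact_mod_cast hi.2
        calc (i : ℝ) * s' + s' = ((i : ℝ) + 1) * s' := by ring
        _ ≤ (u / s') * s' := mul_le_mul_of_nonneg_right (le_trans hii hfl) hs'.le
        _ = u := div_mul_cancel₀ _ hs'.ne'
      constructor
      · have hle : (i : ℝ) * s' + s' ≤ L := by linarith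
        rw [hL] at hle
        have hni : ((i : ℝ) + 1) * s' ≤ (n : ℝ) * s' := by nlinarith
        have : (i : ℝ) + 1 ≤ (n : ℝ) := le_of_mul_le_mul_right hni hs'
        exact_mod_cast this
      · intro ξ hξ1 hξ2
        rw [abs_le]
        constructor <;> linarith
    · rw [Nat.card_Ico]
      have := cast_sub_le_cast i₁ i₀
      have hdiff : r / (2 * s') - 2 ≤ (i₁ : ℝ) - i₀ := by
        have e1 : u / s' - (u - r/2) / s' = r / (2 * s') := by
          field_simp
          ring
        nlinarith [hfl', hcl']
      have h48 : r / (4 * s') ≤ r / (2 * s') - 2 := by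
        rw [div_sub' (by positivity), div_le_div_iff₀ (by positivity) (by positivity)]
        nlinarith
      linarith


lemma x_coord_bounds (x : ↥(carpet a)) :
    (0 ≤ (x : Plane) 0 ∧ (x : Plane) 0 ≤ 1) ∧ (0 ≤ (x : Plane) 1 ∧ (x : Plane) 1 ≤ 1) := by
  have hx : (x : Plane) ∈ precarpet a 0 := carpet_subset_precarpet 0 x.2
  obtain ⟨c, hc, hy0, hy1⟩ := mem_precarpet_iff.mp hx
  obtain ⟨h0, h1⟩ := hc
  rw [sA_zero] at hy0 hy1
  rw [h0] at hy0
  rw [h1] at hy1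
  constructor
  · exact ⟨hy0.1, by linarith [hy0.2]⟩
  · exact ⟨hy1.1, by linarith [hy1.2]⟩

lemma IsNaturalMeasure.mu_ball_upper (ha : GoodSeq a) (hμ : IsNaturalMeasure a μ)
    (x : ↥(carpet a)) {r : ℝ} (hr : 0 < r) :
    μ (Metric.ball x r) ≤ ENNReal.ofReal
      (25 * (r ^ 2 * ∏ j ∈ Finset.range (sInf {m : ℕ | sA a m ≤ r}), (1 - a j ^ 2)⁻¹)) := by
  classical
  set m := sInf {m : ℕ | sA a m ≤ r} with hm
  have hsm : sA a m ≤ r := ha.sA_mIndex_le hr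
  have hs : 0 < sA a m := ha.sA_pos m
  set s := sA a m with hsdef
  set T0 : ℕ := ⌊(x : Plane) 0 / s⌋₊ with hT0
  set T1 : ℕ := ⌊(x : Plane) 1 / s⌋₊ with hT1
  set D : ℕ := ⌈r / s⌉₊ with hD
  set G : Finset (ℕ × ℕ) :=
    Finset.Icc (T0 - D) (T0 + D) ×ˢ Finset.Icc (T1 - D) (T1 + D) with hG
  obtain ⟨⟨hx00, hx01⟩, ⟨hx10, hx11⟩⟩ := x_coord_bounds x
  -- generic 1-D index bound
  have haxis : ∀ (xc : ℝ) (p : ℕ), 0 ≤ xc →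
      (p : ℝ) * s < xc + r → xc - r < (p : ℝ) * s + s →
      p ∈ Finset.Icc (⌊xc / s⌋₊ - D) (⌊xc / s⌋₊ + D) := by
    intro xc p hxc h1 h2
    set T : ℕ := ⌊xc / s⌋₊ with hT
    have hfl : (T : ℝ) ≤ xc / s := Nat.floor_le (by positivity)
    have hfl' : xc / s < (T : ℝ) + 1 := Nat.lt_floor_add_one _
    have hDl : r / s ≤ (D : ℝ) := Nat.le_ceil _
    rw [Finset.mem_Icc]
    constructor
    · -- T - D ≤ p
      rcases Nat.le_total T D with hTD | hTD
      · simp [Nat.sub_eq_zero_of_le hTD]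
      · have hcast : ((T - D : ℕ) : ℝ) = (T : ℝ) - D := by
          rw [Nat.cast_sub hTD]
        have h3 : (T : ℝ) * s ≤ xc := by
          have := mul_le_mul_of_nonneg_right hfl hs.le
          rwa [div_mul_cancel₀ _ hs.ne'] at this
        have hDs : r ≤ (D : ℝ) * s := by
          have := mul_le_mul_of_nonneg_right hDl hs.le
          rwa [div_mul_cancel₀ _ hs.ne'] at this
        have h4 : ((T:ℝ) - D) * s ≤ xc - r := by nlinarith
        have h5 : ((T:ℝ) - D) * s < (p : ℝ) * s + s := lt_of_le_of_lt h4 h2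
        have h6 : (T:ℝ) - D < (p : ℝ) + 1 := by
          have := lt_of_mul_lt_mul_right (by linarith [h5] : ((T:ℝ) - D) * s < ((p:ℝ) + 1) * s) hs.le
          exact this
        have h7 : ((T - D : ℕ) : ℝ) < (p : ℝ) + 1 := by rw [hcast]; exact h6
        have : T - D < p + 1 := by exact_mod_cast h7
        omega
    · -- p ≤ T + D
      have h8 : (p : ℝ) < xc / s + r / s := by
        have h8' : (p : ℝ) < (xc + r) / s := (lt_div_iff₀ hs).mpr h1
        rwa [add_div] at h8'
      have h9 : (p : ℝ) < (T : ℝ) + 1 + D := by linarith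
      have : p < T + 1 + D := by exact_mod_cast h9
      omega
  have hcover : ∀ c ∈ corners a m, (csq c s ∩ Metric.ball (x : Plane) r).Nonempty →
      ∃ g ∈ G, c 0 = g.1 * s ∧ c 1 = g.2 * s := by
    rintro c hc ⟨y, ⟨hy0, hy1⟩, hyb⟩
    obtain ⟨⟨p, hp⟩, ⟨q, hq⟩, -, -⟩ := ha.corners_grid hc
    have hd : dist y (x : Plane) < r := Metric.mem_ball.mp hyb
    have hd0 : |y 0 - (x : Plane) 0| ≤ dist y (x : Plane) := coord_dist_le y _ 0
    have hd1 : |y 1 - (x : Plane) 1| ≤ dist y (x : Plane) := coord_dist_le y _ 1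
    rw [abs_le] at hd0 hd1
    refine ⟨(p, q), ?_, hp, hq⟩
    rw [hG, Finset.mem_product]
    constructor
    · exact haxis _ p hx00 (by rw [← hp]; linarith [hy0.1, hd0.2]) (by rw [← hp]; linarith [hy0.2, hd0.1])
    · exact haxis _ q hx10 (by rw [← hq]; linarith [hy1.1, hd1.2]) (by rw [← hq]; linarith [hy1.2, hd1.1])
  have hGcard : G.card ≤ (2 * D + 1) ^ 2 := by
    rw [hG, Finset.card_product, Nat.card_Icc, Nat.card_Icc]
    have h1 : T0 + D + 1 - (T0 - D) ≤ 2 * D + 1 := by omega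
    have h2 : T1 + D + 1 - (T1 - D) ≤ 2 * D + 1 := by omega
    calc (T0 + D + 1 - (T0 - D)) * (T1 + D + 1 - (T1 - D)) ≤ (2*D+1) * (2*D+1) :=
        Nat.mul_le_mul h1 h2
    _ = (2*D+1)^2 := (sq (2*D+1)).symm
  calc μ (Metric.ball x r) = μ (Subtype.val ⁻¹' Metric.ball (x : Plane) r) := by
        rw [ball_subtype_eq]
  _ ≤ G.card * ENNReal.ofReal (massA a m) := hμ.mu_le_card_mass ha m _ G hcover
  _ ≤ ((2*D+1)^2 : ℕ) * ENNReal.ofReal (massA a m) :=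
        mul_le_mul_left (by exact_mod_cast hGcard) _
  _ = ENNReal.ofReal (((2*D+1)^2 : ℕ) * massA a m) := by
        rw [ENNReal.ofReal_mul (by positivity), ENNReal.ofReal_natCast]
  _ ≤ ENNReal.ofReal (25 * (r ^ 2 * ∏ j ∈ Finset.range m, (1 - a j ^ 2)⁻¹)) := by
        apply ENNReal.ofReal_le_ofReal
        have hDd : (D : ℝ) < r / s + 1 := Nat.ceil_lt_add_one (by positivity)
        have hrs1 : 1 ≤ r / s := (one_le_div hs).mpr hsm
        have h2D : (((2*D+1)^2 : ℕ) : ℝ) ≤ (5 * (r/s))^2 := by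
          push_cast
          have : (2 : ℝ) * D + 1 ≤ 5 * (r/s) := by linarith
          have hpos : (0:ℝ) ≤ 2 * D + 1 := by positivity
          nlinarith
        have hmass : massA a m = s ^ 2 * ∏ j ∈ Finset.range m, (1 - a j ^ 2)⁻¹ :=
          ha.massA_eq m
        have hP : 0 < ∏ j ∈ Finset.range m, (1 - a j ^ 2)⁻¹ := by
          refine Finset.prod_pos fun j _ => inv_pos.mpr (ha.one_sub_sq_pos j)
        have e : (5 * (r/s))^2 * massA a m =
            25 * (r ^ 2 * ∏ j ∈ Finset.range m, (1 - a j ^ 2)⁻¹) := by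
          rw [hmass]
          field_simp
          ring
        calc (((2*D+1)^2 : ℕ) : ℝ) * massA a m ≤ (5 * (r/s))^2 * massA a m :=
              mul_le_mul_of_nonneg_right h2D (ha.massA_pos m).le
        _ = _ := e


/-- quadrant block for the case `s_m ≤ r < 8 s_m`. -/
lemma half_block {s' L xc cc r : ℝ} {k : ℕ} (hs' : 0 < s') (hk : 1 ≤ k)
    (hL : L = (2 * k + 1 : ℕ) * s') (hx1 : cc ≤ xc) (hx2 : xc ≤ cc + L) (hrs : L ≤ r) :
    ∃ b : ℕ, (b = 0 ∨ b = k + 1) ∧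
      ∀ i ∈ Finset.Ico b (b + k), ∀ ξ : ℝ,
        cc + (i : ℝ) * s' ≤ ξ → ξ ≤ cc + (i : ℝ) * s' + s' → |ξ - xc| ≤ r / 2 := by
  have hL0 : 0 < L := by
    rw [hL]
    have : (1:ℝ) ≤ ((2 * k + 1 : ℕ) : ℝ) := by exact_mod_cast Nat.one_le_iff_ne_zero.mpr (by omega)
    nlinarith
  have hcast : ((2 * k + 1 : ℕ) : ℝ) = 2 * (k : ℝ) + 1 := by push_cast; ring
  rcases le_or_gt xc (cc + L / 2) with hx | hx
  · refine ⟨0, Or.inl rfl, fun i hi ξ hξ1 hξ2 => ?_⟩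
    rw [Finset.mem_Ico] at hi
    have hik' : i + 1 ≤ k := by omega
    have hik : (i : ℝ) + 1 ≤ (k : ℝ) := by exact_mod_cast hik' 
    have hup : ξ ≤ cc + L / 2 := by
      have : ((i : ℝ) + 1) * s' ≤ (k : ℝ) * s' := by nlinarith
      have hk2 : (k : ℝ) * s' ≤ L / 2 := by
        rw [hL, hcast]
        nlinarith
      nlinarith
    have hdown : cc ≤ ξ := by
      have : (0:ℝ) ≤ (i : ℝ) * s' := by positivity
      linarith
    rw [abs_le]
    constructor <;> nlinarith
  · refine ⟨k + 1, Or.inr rfl, fun i hi ξ hξ1 hξ2 => ?_⟩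
    rw [Finset.mem_Ico] at hi
    have hik'' : k + 1 ≤ i := hi.1
    have hik : (k : ℝ) + 1 ≤ (i : ℝ) := by exact_mod_cast hik'' 
    have hik2 : (i : ℝ) + 1 ≤ 2 * (k : ℝ) + 1 := by
      have : i + 1 ≤ 2 * k + 1 := by omega
      exact_mod_cast this
    have hdown : cc + L / 2 ≤ ξ := by
      have h1 : ((k : ℝ) + 1) * s' ≤ (i : ℝ) * s' := by nlinarith
      have h2 : L / 2 ≤ ((k : ℝ) + 1) * s' := by
        rw [hL, hcast]
        nlinarith
      linarith
    have hup : ξ ≤ cc + L := by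
      have : ((i : ℝ) + 1) * s' ≤ (2 * (k : ℝ) + 1) * s' := by nlinarith
      rw [hL, hcast]
      nlinarith
    rw [abs_le]
    constructor <;> nlinarith

lemma IsNaturalMeasure.mu_ball_lower (ha : GoodSeq a) (hμ : IsNaturalMeasure a μ)
    (x : ↥(carpet a)) {r : ℝ} (hr : 0 < r) (hr1 : r ≤ 1) :
    ENNReal.ofReal ((512 : ℝ)⁻¹ *
        (r ^ 2 * ∏ j ∈ Finset.range (sInf {m : ℕ | sA a m ≤ r}), (1 - a j ^ 2)⁻¹)) ≤
      μ (Metric.ball x r) := by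
  classical
  set m := sInf {m : ℕ | sA a m ≤ r} with hm
  have hsm : sA a m ≤ r := ha.sA_mIndex_le hr
  have hs : 0 < sA a m := ha.sA_pos m
  set P := ∏ j ∈ Finset.range m, (1 - a j ^ 2)⁻¹ with hP
  have hPpos : 0 < P := Finset.prod_pos fun j _ => inv_pos.mpr (ha.one_sub_sq_pos j)
  have hmassP : massA a m = sA a m ^ 2 * P := ha.massA_eq m
  rw [ball_subtype_eq]
  rcases lt_or_ge r (8 * sA a m) with hA | hB
  · -- CASE A : s_m ≤ r < 8 s_m ; use a quadrant of the level-m square containing x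
    obtain ⟨c₀, hc₀, hxc⟩ := mem_precarpet_iff.mp (carpet_subset_precarpet m x.2)
    obtain ⟨k, hk1, hnk, -⟩ := ha.nA_spec m
    set s' := sA a (m + 1) with hs'def
    have hs' : 0 < s' := ha.sA_pos (m + 1)
    have hLn : sA a m = (nA a m : ℝ) * s' := ha.sA_eq_nA_mul m
    have hLk : sA a m = ((2 * k + 1 : ℕ) : ℝ) * s' := by rw [hLn, hnk]
    obtain ⟨hx0, hx1⟩ := hxc
    obtain ⟨b0, hb0, hblk0⟩ := half_block hs' hk1 hLk hx0.1 hx0.2 hsm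
    obtain ⟨b1, hb1, hblk1⟩ := half_block hs' hk1 hLk hx1.1 hx1.2 hsm
    set F : Finset (ℕ × ℕ) := Finset.Ico b0 (b0 + k) ×ˢ Finset.Ico b1 (b1 + k) with hF
    set cf : ℕ × ℕ → Plane := fun g => pt (c₀ 0 + g.1 * s') (c₀ 1 + g.2 * s') with hcf
    have hcoord : ∀ g : ℕ × ℕ, cf g 0 = c₀ 0 + g.1 * s' ∧ cf g 1 = c₀ 1 + g.2 * s' :=
      fun g => ⟨rfl, rfl⟩
    have hmem : ∀ g ∈ F, cf g ∈ corners a (m + 1) := by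
      intro g hg
      rw [hF, Finset.mem_product, Finset.mem_Ico, Finset.mem_Ico] at hg
      refine ⟨c₀, hc₀, g.1, g.2, ?_, ?_, ?_, rfl, rfl⟩
      · rw [hnk]; omega
      · rw [hnk]; omega
      · rw [hnk]
        rintro ⟨e1, e2⟩
        rcases hb0 with h | h <;> rcases hb1 with h' | h' <;> omega
    have hsub : ∀ g ∈ F, csq (cf g) s' ⊆ Metric.ball (x : Plane) r := by
      intro g hg
      rw [hF, Finset.mem_product] at hg
      obtain ⟨e0, e1⟩ := hcoord g
      refine csq_subset_ball hr hs'.le ?_ ?_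
      · rw [e0]
        exact ⟨hblk0 g.1 hg.1 _ le_rfl (by linarith),
          hblk0 g.1 hg.1 _ (by linarith) le_rfl⟩
      · rw [e1]
        exact ⟨hblk1 g.2 hg.2 _ le_rfl (by linarith),
          hblk1 g.2 hg.2 _ (by linarith) le_rfl⟩
    have hkey := hμ.card_mass_le_mu (m := m + 1) ha c₀ cf hcoord hmem hsub
    have hcard : F.card = k * k := by
      rw [hF, Finset.card_product, Nat.card_Ico, Nat.card_Ico,
        Nat.add_sub_cancel_left, Nat.add_sub_cancel_left]
    refine le_trans ?_ hkey
    rw [hcard, ← ENNReal.ofReal_natCast, ← ENNReal.ofReal_mul (by positivity)]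
    apply ENNReal.ofReal_le_ofReal
    have hmass1 : massA a (m + 1) = massA a m * (((nA a m : ℝ)) ^ 2 - 1)⁻¹ := ha.massA_succ m
    have hnkr : ((nA a m : ℝ)) = 2 * (k : ℝ) + 1 := by rw [hnk]; push_cast; ring
    have hkpos : (0:ℝ) < (k : ℝ) := by exact_mod_cast hk1
    have hden : ((nA a m : ℝ)) ^ 2 - 1 = 4 * (k:ℝ)^2 + 4 * k := by rw [hnkr]; ring
    have hfrac : (8:ℝ)⁻¹ ≤ (k:ℝ) * k * (4 * (k:ℝ)^2 + 4 * k)⁻¹ := by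
      rw [show (k:ℝ) * k * (4 * (k:ℝ)^2 + 4 * k)⁻¹ = (k:ℝ) * k / (4 * (k:ℝ)^2 + 4 * k) from
        (div_eq_mul_inv _ _).symm]
      rw [le_div_iff₀ (by positivity)]
      have hk1r : (1:ℝ) ≤ (k:ℝ) := by exact_mod_cast hk1
      nlinarith
    have heq : ((k * k : ℕ) : ℝ) * massA a (m + 1) =
        ((k:ℝ) * k * (4 * (k:ℝ)^2 + 4 * k)⁻¹) * (sA a m ^ 2 * P) := by
      rw [hmass1, hmassP, hden]
      push_cast
      ring
    have hs8 : (r / 8) ^ 2 ≤ sA a m ^ 2 := by nlinarith [sq_nonneg (sA a m - r/8), sq_nonneg (sA a m + r/8)]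
    calc (512:ℝ)⁻¹ * (r ^ 2 * P) = 8⁻¹ * ((r/8)^2 * P) := by ring
    _ ≤ 8⁻¹ * (sA a m ^ 2 * P) := by
        apply mul_le_mul_of_nonneg_left (mul_le_mul_of_nonneg_right hs8 hPpos.le) (by norm_num)
    _ ≤ ((k:ℝ) * k * (4 * (k:ℝ)^2 + 4 * k)⁻¹) * (sA a m ^ 2 * P) := by
        apply mul_le_mul_of_nonneg_right hfrac (by positivity)
    _ = ((k * k : ℕ) : ℝ) * massA a (m + 1) := heq.symm
  · -- CASE B : 8 s_m ≤ r, so m ≥ 1; use a block of level-m squares in the parent square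
    have hm0 : m ≠ 0 := by
      intro h
      have h8 : (8:ℝ) * sA a 0 ≤ r := by rw [← h]; exact hB
      rw [sA_zero] at h8
      linarith
    obtain ⟨m', hmm'⟩ := Nat.exists_eq_succ_of_ne_zero hm0
    have hrm' : r < sA a m' := by
      apply ha.lt_sA_of_lt_mIndex
      rw [← hm]
      omega
    obtain ⟨c₀, hc₀, hxc⟩ := mem_precarpet_iff.mp (carpet_subset_precarpet m' x.2)
    obtain ⟨K, hK1, hnK, -⟩ := ha.nA_spec m'
    set s := sA a m with hsdef2
    have hsm1 : sA a (m' + 1) = s := by rw [hsdef2, hmm']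
    have hL : sA a m' = (nA a m' : ℝ) * s := by
      rw [← hsm1]
      exact ha.sA_eq_nA_mul m'
    have hr8 : 8 * s ≤ r := by linarith
    set u0 : ℝ := (x : Plane) 0 - c₀ 0 with hu0def
    set u1 : ℝ := (x : Plane) 1 - c₀ 1 with hu1def
    obtain ⟨hx0, hx1⟩ := hxc
    obtain ⟨A0, hA0, hA0c⟩ := block_exists (n := nA a m') (u := u0) hs hL
      (by rw [hu0def]; linarith [hx0.1]) (by rw [hu0def]; linarith [hx0.2]) hrm'.le hr8
    obtain ⟨A1, hA1, hA1c⟩ := block_exists (n := nA a m') (u := u1) hs hL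
      (by rw [hu1def]; linarith [hx1.1]) (by rw [hu1def]; linarith [hx1.2]) hrm'.le hr8
    set ctr : ℕ := (nA a m' - 1) / 2 with hctr
    set F : Finset (ℕ × ℕ) := (A0 ×ˢ A1).erase (ctr, ctr) with hF
    set cf : ℕ × ℕ → Plane := fun g => pt (c₀ 0 + g.1 * s) (c₀ 1 + g.2 * s) with hcf
    have hcoord : ∀ g : ℕ × ℕ, cf g 0 = c₀ 0 + g.1 * s ∧ cf g 1 = c₀ 1 + g.2 * s :=
      fun g => ⟨rfl, rfl⟩
    have hmem : ∀ g ∈ F, cf g ∈ corners a m := by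
      intro g hg
      have hgp := Finset.mem_of_mem_erase hg
      rw [Finset.mem_product] at hgp
      have hgne := Finset.ne_of_mem_erase hg
      rw [hmm']
      refine ⟨c₀, hc₀, g.1, g.2, (hA0 g.1 hgp.1).1, (hA1 g.2 hgp.2).1, ?_, ?_, ?_⟩
      · rintro ⟨e1, e2⟩
        exact hgne (Prod.ext (by rw [e1, hctr]) (by rw [e2, hctr]))
      · rw [← hsm1] at hcoord
        exact (hcoord g).1
      · rw [← hsm1] at hcoord
        exact (hcoord g).2
    have hsub : ∀ g ∈ F, csq (cf g) s ⊆ Metric.ball (x : Plane) r := by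
      intro g hg
      have hgp := Finset.mem_of_mem_erase hg
      rw [Finset.mem_product] at hgp
      obtain ⟨e0, e1⟩ := hcoord g
      have t01 := (hA0 g.1 hgp.1).2 ((g.1 : ℝ) * s) le_rfl (by linarith)
      have t02 := (hA0 g.1 hgp.1).2 ((g.1 : ℝ) * s + s) (by linarith) le_rfl
      have t11 := (hA1 g.2 hgp.2).2 ((g.2 : ℝ) * s) le_rfl (by linarith)
      have t12 := (hA1 g.2 hgp.2).2 ((g.2 : ℝ) * s + s) (by linarith) le_rfl
      refine csq_subset_ball hr hs.le ?_ ?_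
      · rw [e0]
        constructor
        · rw [show c₀ 0 + (g.1 : ℝ) * s - (x : Plane) 0 = (g.1 : ℝ) * s - u0 by
            rw [hu0def]; ring]
          exact t01
        · rw [show c₀ 0 + (g.1 : ℝ) * s + s - (x : Plane) 0 = ((g.1 : ℝ) * s + s) - u0 by
            rw [hu0def]; ring]
          exact t02
      · rw [e1]
        constructor
        · rw [show c₀ 1 + (g.2 : ℝ) * s - (x : Plane) 1 = (g.2 : ℝ) * s - u1 by
            rw [hu1def]; ring]
          exact t11
        · rw [show c₀ 1 + (g.2 : ℝ) * s + s - (x : Plane) 1 = ((g.2 : ℝ) * s + s) - u1 by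
            rw [hu1def]; ring]
          exact t12
    have hkey := hμ.card_mass_le_mu (m := m) ha c₀ cf hcoord hmem hsub
    refine le_trans ?_ hkey
    rw [← ENNReal.ofReal_natCast, ← ENNReal.ofReal_mul (Nat.cast_nonneg _)]
    apply ENNReal.ofReal_le_ofReal
    -- counting
    set w : ℝ := r / (4 * s) with hwdef
    have hw2 : (2:ℝ) ≤ w := by
      rw [hwdef, le_div_iff₀ (by positivity)]
      linarith
    have hw0 : (0:ℝ) ≤ w := by linarith
    have hFcard : (w * w - 1 : ℝ) ≤ (F.card : ℝ) := by
      have hnat : A0.card * A1.card - 1 ≤ F.card := by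
        rw [hF]
        have := Finset.pred_card_le_card_erase (s := A0 ×ˢ A1) (a := (ctr, ctr))
        rwa [Finset.card_product] at this
      have hcast : ((A0.card * A1.card - 1 : ℕ) : ℝ) ≤ (F.card : ℝ) := by exact_mod_cast hnat
      have h2 : (A0.card : ℝ) * A1.card - 1 ≤ ((A0.card * A1.card - 1 : ℕ) : ℝ) := by
        have := cast_sub_le_cast (A0.card * A1.card) 1
        push_cast at this ⊢
        linarith
      have h3 : w * w ≤ (A0.card : ℝ) * A1.card :=
        mul_le_mul hA0c hA1c hw0 (Nat.cast_nonneg _)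
      linarith
    have hww : (4:ℝ) ≤ w * w := by
      have := mul_le_mul hw2 hw2 (by norm_num) hw0
      linarith
    have h34 : (3/4 : ℝ) * (w * w) ≤ w * w - 1 := by linarith
    have he : w * w * s ^ 2 = r ^ 2 / 16 := by
      rw [hwdef]
      field_simp
      ring
    calc (512:ℝ)⁻¹ * (r ^ 2 * P) ≤ (3/4) * (w * w) * (s ^ 2 * P) := by
          have e2 : (3/4 : ℝ) * (w * w) * (s ^ 2 * P) = (3/4) * (w * w * s ^ 2) * P := by ring
          rw [e2, he]
          have hrp : (0:ℝ) ≤ r ^ 2 * P := by positivity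
          have e3 : (3/4 : ℝ) * (r ^ 2 / 16) * P = (3/64) * (r ^ 2 * P) := by ring
          rw [e3]
          linarith
    _ ≤ (w * w - 1) * (s ^ 2 * P) := by
          apply mul_le_mul_of_nonneg_right h34 (by positivity)
    _ ≤ (F.card : ℝ) * (s ^ 2 * P) := by
          apply mul_le_mul_of_nonneg_right hFcard (by positivity)
    _ = (F.card : ℝ) * massA a m := by rw [hmassP]

end Aux

/-- For every `x ∈ S_a` and `0 < r ≤ 1`, `μ(B(x,r)) ≍ h(r) := r² ∏_{j=1}^{m(r)} (1-a_j²)⁻¹`,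
with absolute comparison constants independent of `a`, `x` and `r`. -/
theorem carpet_measure_ball_comparable :
    ∃ c C : ℝ, 0 < c ∧ c ≤ C ∧
      ∀ a : ℕ → ℝ, GoodSeq a → ∀ μ : Measure ↥(carpet a), IsNaturalMeasure a μ →
        ∀ x : ↥(carpet a), ∀ r : ℝ, 0 < r → r ≤ 1 →
          ENNReal.ofReal
              (c * (r ^ 2 * ∏ j ∈ Finset.range (mIndex a r), (1 - (a j) ^ 2)⁻¹)) ≤
            μ (ball x r) ∧
          μ (ball x r) ≤
            ENNReal.ofReal
              (C * (r ^ 2 * ∏ j ∈ Finset.range (mIndex a r), (1 - (a j) ^ 2)⁻¹)) := by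
  refine ⟨(512:ℝ)⁻¹, 25, by norm_num, by norm_num, ?_⟩
  intro a ha μ hμ x r hr hr1
  constructor
  · simpa [mIndex] using hμ.mu_ball_lower ha x hr hr1
  · simpa [mIndex] using hμ.mu_ball_upper ha x hr

end
end
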